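/- arXiv:2408.17234 — 4 statements merged into one kernel-verified Lean document; each statement's English description precedes it below -/
import Mathlib

section
/- In the Sierpiński triangle graph ST_3^n (n ≥ 0), the distance between any two vertices is at most 2^n. -/
namespace SierpinskiTriangle

/-- The unit upward triangle ("cell") with lower-left corner `c` is present in the
level-`n` Sierpiński triangle (Pascal-mod-2 characterization). -/
def Cell (n : ℕ) (c : ℕ × ℕ) : Prop :=
  Nat.land c.1 c.2 = 0 ∧ c.1 + c.2 < 2 ^ n

/-- The three corner points of the cell with lower-left corner `c`. -/
def cellCorners (c : ℕ × ℕ) : Set (ℕ × ℕ) :=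
  {c, (c.1 + 1, c.2), (c.1, c.2 + 1)}

/-- The Sierpiński triangle graph `ST₃ⁿ`, realized on the ambient type `ℕ × ℕ`
(points that are not vertices of `ST₃ⁿ` are isolated). Two distinct points are
adjacent iff they are corners of a common present cell. -/
def graph (n : ℕ) : SimpleGraph (ℕ × ℕ) where
  Adj u v := u ≠ v ∧ ∃ c, Cell n c ∧ u ∈ cellCorners c ∧ v ∈ cellCorners c
  symm := ⟨fun u v ⟨huv, c, hc, hu, hv⟩ => ⟨huv.symm, c, hc, hv, hu⟩⟩
  loopless := ⟨fun u h => h.1 rfl⟩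

/-- The vertex set of `ST₃ⁿ`. -/
def verts (n : ℕ) : Set (ℕ × ℕ) := {v | ∃ c, Cell n c ∧ v ∈ cellCorners c}

/-- The three extreme vertices of `ST₃ⁿ`. -/
def extreme (n : ℕ) : Set (ℕ × ℕ) := {(0, 0), (2 ^ n, 0), (0, 2 ^ n)}

/-- `IsCopy n m o` : the translate by `o` of `ST₃ᵐ` is one of the canonical copies
of `ST₃ᵐ` inside `ST₃ⁿ` arising from the recursive construction. -/
def IsCopy (n m : ℕ) (o : ℕ × ℕ) : Prop :=
  ∃ i j : ℕ, o = (i * 2 ^ m, j * 2 ^ m) ∧ Nat.land i j = 0 ∧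
    i * 2 ^ m + j * 2 ^ m + 2 ^ m ≤ 2 ^ n

/-- The vertex set of the copy of `ST₃ᵐ` at offset `o`. -/
def copyVerts (m : ℕ) (o : ℕ × ℕ) : Set (ℕ × ℕ) :=
  (fun v : ℕ × ℕ => (o.1 + v.1, o.2 + v.2)) '' verts m

/-- The extreme vertices of the copy of `ST₃ᵐ` at offset `o`. -/
def copyExtreme (m : ℕ) (o : ℕ × ℕ) : Set (ℕ × ℕ) :=
  {(o.1, o.2), (o.1 + 2 ^ m, o.2), (o.1, o.2 + 2 ^ m)}

/-- A walk is a shortest (geodesic) walk if its length equals the graph distance. -/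
def IsShortest {V : Type*} (G : SimpleGraph V) {u v : V} (w : G.Walk u v) : Prop :=
  w.length = G.dist u v

/-- `u` and `v` are `M`-visible: some shortest `u,v`-path avoids `M \ {u, v}`. -/
def Visible {V : Type*} (G : SimpleGraph V) (M : Set V) (u v : V) : Prop :=
  ∃ w : G.Walk u v, IsShortest G w ∧ ∀ x ∈ w.support, x ∈ M → x = u ∨ x = v

/-- The interval `I(u,v)`: the set of vertices lying on some shortest `u,v`-path. -/
def interval {V : Type*} (G : SimpleGraph V) (u v : V) : Set V :=
  {x | ∃ w : G.Walk u v, IsShortest G w ∧ x ∈ w.support}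

/-- `M` is a mutual-visibility set of `ST₃ⁿ`. -/
def IsMutualVisSet (n : ℕ) (M : Set (ℕ × ℕ)) : Prop :=
  M ⊆ verts n ∧ ∀ u ∈ M, ∀ v ∈ M, Visible (graph n) M u v

/-- `M` is a total mutual-visibility set of `ST₃ⁿ`. -/
def IsTotalMutualVisSet (n : ℕ) (M : Set (ℕ × ℕ)) : Prop :=
  M ⊆ verts n ∧ ∀ u ∈ verts n, ∀ v ∈ verts n, Visible (graph n) M u v

/-- `M` is an outer mutual-visibility set of `ST₃ⁿ`. -/
def IsOuterMutualVisSet (n : ℕ) (M : Set (ℕ × ℕ)) : Prop :=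
  IsMutualVisSet n M ∧ ∀ u ∈ M, ∀ v ∈ verts n \ M, Visible (graph n) M u v

/-- `M` is a dual mutual-visibility set of `ST₃ⁿ`. -/
def IsDualMutualVisSet (n : ℕ) (M : Set (ℕ × ℕ)) : Prop :=
  IsMutualVisSet n M ∧ ∀ u ∈ verts n \ M, ∀ v ∈ verts n \ M, Visible (graph n) M u v

/-- `M` is a general position set of `ST₃ⁿ`. -/
def IsGenPosSet (n : ℕ) (M : Set (ℕ × ℕ)) : Prop :=
  M ⊆ verts n ∧ ∀ u ∈ M, ∀ v ∈ M, ∀ w ∈ M, u ≠ v → u ≠ w → v ≠ w →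
    (graph n).dist u v ≠ (graph n).dist u w + (graph n).dist w v

/-- The proper vertices of the copy of `ST₃²` at offset `o` inside `ST₃ⁿ`: the vertices
of the copy lying on no shortest path between two of its extreme vertices. -/
def properVerts (n : ℕ) (o : ℕ × ℕ) : Set (ℕ × ℕ) :=
  copyVerts 2 o \
    (interval (graph n) (o.1, o.2) (o.1 + 4, o.2) ∪
     interval (graph n) (o.1, o.2) (o.1, o.2 + 4) ∪
     interval (graph n) (o.1 + 4, o.2) (o.1, o.2 + 4))

/-! ### Auxiliary bitwise lemmas -/

private lemma land_eq_and (a b : ℕ) : Nat.land a b = a &&& b := rfl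

private lemma testBit_or_of_land_eq_zero {a b : ℕ} (h : a &&& b = 0) (i : ℕ) :
    Nat.testBit a i = false ∨ Nat.testBit b i = false := by
  have := congrArg (Nat.testBit · i) h
  simp only [Nat.testBit_and, Nat.zero_testBit, Bool.and_eq_false_iff] at this
  exact this

private lemma add_lt_two_pow_of_land_eq_zero :
    ∀ (n a b : ℕ), a &&& b = 0 → a < 2 ^ n → b < 2 ^ n → a + b < 2 ^ n := by
  intro n
  induction n with
  | zero => intro a b _ ha hb; simpa using by omega
  | succ n ih =>
    intro a b h ha hb
    have h2 : a / 2 &&& b / 2 = 0 := by rw [← Nat.and_div_two, h]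
    have e2 : 2 ^ (n + 1) = 2 * 2 ^ n := by ring
    have hd := ih (a / 2) (b / 2) h2 (by omega) (by omega)
    have hodd : a % 2 = 0 ∨ b % 2 = 0 := by
      rcases testBit_or_of_land_eq_zero h 0 with h' | h' <;>
        simp only [Nat.testBit_zero, decide_eq_false_iff_not] at h' <;> omega
    omega

private lemma land_two_pow_add {n a b : ℕ} (ha : a < 2 ^ n) (hb : b < 2 ^ n)
    (h : a &&& b = 0) : (2 ^ n + a) &&& b = 0 := by
  apply Nat.zero_of_testBit_eq_false
  intro i
  rw [Nat.testBit_and]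
  rcases lt_or_ge i n with hi | hi
  · rw [Nat.testBit_two_pow_add_gt hi]
    rcases testBit_or_of_land_eq_zero h i with h' | h' <;> simp [h']
  · have : Nat.testBit b i = false :=
      Nat.testBit_lt_two_pow (lt_of_lt_of_le hb (Nat.pow_le_pow_right (by norm_num) hi))
    simp [this]

private lemma land_sub_two_pow {n a b : ℕ} (h : a &&& b = 0) (h1 : 2 ^ n ≤ a)
    (h2 : a < 2 ^ (n + 1)) : (a - 2 ^ n) &&& b = 0 := by
  have e2 : 2 ^ (n + 1) = 2 * 2 ^ n := by ring
  have ha : a = 2 ^ n + (a - 2 ^ n) := by omega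
  have ha' : a - 2 ^ n < 2 ^ n := by omega
  apply Nat.zero_of_testBit_eq_false
  intro i
  rw [Nat.testBit_and]
  rcases lt_or_ge i n with hi | hi
  · have e : Nat.testBit (a - 2 ^ n) i = Nat.testBit a i := by
      conv_rhs => rw [ha]
      rw [Nat.testBit_two_pow_add_gt hi]
    rcases testBit_or_of_land_eq_zero h i with h' | h' <;> simp [e, h']
  · have : Nat.testBit (a - 2 ^ n) i = false :=
      Nat.testBit_lt_two_pow (lt_of_lt_of_le ha' (Nat.pow_le_pow_right (by norm_num) hi))
    simp [this]

/-! ### Graph homomorphisms between consecutive levels -/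

private lemma adjA {n : ℕ} {u v : ℕ × ℕ} (h : (graph n).Adj u v) :
    (graph (n + 1)).Adj u v := by
  obtain ⟨hne, c, ⟨hl, hs⟩, hu, hv⟩ := h
  have e2 : (2:ℕ) ^ (n+1) = 2 * 2 ^ n := by ring
  exact ⟨hne, c, ⟨hl, by omega⟩, hu, hv⟩

private lemma adjB {n : ℕ} {u v : ℕ × ℕ} (h : (graph n).Adj u v) :
    (graph (n + 1)).Adj (2 ^ n + u.1, u.2) (2 ^ n + v.1, v.2) := by
  obtain ⟨hne, c, ⟨hl, hs⟩, hu, hv⟩ := h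
  rw [land_eq_and] at hl
  have h1 : c.1 < 2 ^ n := by omega
  have h2 : c.2 < 2 ^ n := by omega
  have e2 : (2:ℕ) ^ (n+1) = 2 * 2 ^ n := by ring
  refine ⟨?_, (2 ^ n + c.1, c.2), ⟨?_, by omega⟩, ?_, ?_⟩
  · intro he
    apply hne
    rw [Prod.ext_iff] at he ⊢
    simp at he ⊢
    omega
  · exact land_two_pow_add h1 h2 hl
  · simp only [cellCorners, Set.mem_insert_iff, Set.mem_singleton_iff] at hu ⊢
    rcases hu with rfl | rfl | rfl <;> simp [Prod.ext_iff] <;> omega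
  · simp only [cellCorners, Set.mem_insert_iff, Set.mem_singleton_iff] at hv ⊢
    rcases hv with rfl | rfl | rfl <;> simp [Prod.ext_iff] <;> omega

private lemma adjC {n : ℕ} {u v : ℕ × ℕ} (h : (graph n).Adj u v) :
    (graph (n + 1)).Adj (u.1, 2 ^ n + u.2) (v.1, 2 ^ n + v.2) := by
  obtain ⟨hne, c, ⟨hl, hs⟩, hu, hv⟩ := h
  rw [land_eq_and] at hl
  have h1 : c.1 < 2 ^ n := by omega
  have h2 : c.2 < 2 ^ n := by omega
  have e2 : (2:ℕ) ^ (n+1) = 2 * 2 ^ n := by ring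
  refine ⟨?_, (c.1, 2 ^ n + c.2), ⟨?_, by omega⟩, ?_, ?_⟩
  · intro he
    apply hne
    rw [Prod.ext_iff] at he ⊢
    simp at he ⊢
    omega
  · show Nat.land c.1 (2 ^ n + c.2) = 0
    rw [land_eq_and, Nat.and_comm]
    exact land_two_pow_add h2 h1 (by rw [Nat.and_comm]; exact hl)
  · simp only [cellCorners, Set.mem_insert_iff, Set.mem_singleton_iff] at hu ⊢
    rcases hu with rfl | rfl | rfl <;> simp [Prod.ext_iff] <;> omega
  · simp only [cellCorners, Set.mem_insert_iff, Set.mem_singleton_iff] at hv ⊢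
    rcases hv with rfl | rfl | rfl <;> simp [Prod.ext_iff] <;> omega

private def homA (n : ℕ) : graph n →g graph (n + 1) := ⟨id, adjA⟩

private def homB (n : ℕ) : graph n →g graph (n + 1) :=
  ⟨fun v => (2 ^ n + v.1, v.2), adjB⟩

private def homC (n : ℕ) : graph n →g graph (n + 1) :=
  ⟨fun v => (v.1, 2 ^ n + v.2), adjC⟩

/-! ### Anchor vertices -/

private lemma origin_mem_verts (n : ℕ) : ((0, 0) : ℕ × ℕ) ∈ verts n :=
  ⟨(0, 0), ⟨by simp [land_eq_and], by positivity⟩, by simp [cellCorners]⟩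

private lemma right_mem_verts (n : ℕ) : ((2 ^ n, 0) : ℕ × ℕ) ∈ verts n := by
  have hp : (0:ℕ) < 2 ^ n := by positivity
  refine ⟨(2 ^ n - 1, 0), ⟨by simp [land_eq_and], by simpa using by omega⟩, ?_⟩
  simp only [cellCorners, Set.mem_insert_iff, Set.mem_singleton_iff]
  right; left
  simp [Prod.ext_iff]
  omega

private lemma top_mem_verts (n : ℕ) : ((0, 2 ^ n) : ℕ × ℕ) ∈ verts n := by
  have hp : (0:ℕ) < 2 ^ n := by positivity
  refine ⟨(0, 2 ^ n - 1), ⟨by simp [land_eq_and], by simpa using by omega⟩, ?_⟩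
  simp only [cellCorners, Set.mem_insert_iff, Set.mem_singleton_iff]
  right; right
  simp [Prod.ext_iff]
  omega

/-! ### Decomposition of the vertex set of level `n+1` -/

private lemma verts_succ {n : ℕ} {u : ℕ × ℕ} (hu : u ∈ verts (n + 1)) :
    u ∈ verts n ∨ (∃ u' ∈ verts n, u = (2 ^ n + u'.1, u'.2)) ∨
      (∃ u' ∈ verts n, u = (u'.1, 2 ^ n + u'.2)) := by
  obtain ⟨c, ⟨hl, hs⟩, hcor⟩ := hu
  rw [land_eq_and] at hl
  have e2 : (2:ℕ) ^ (n+1) = 2 * 2 ^ n := by ring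
  simp only [cellCorners, Set.mem_insert_iff, Set.mem_singleton_iff] at hcor
  by_cases h1 : c.1 < 2 ^ n
  · by_cases h2 : c.2 < 2 ^ n
    · left
      have := add_lt_two_pow_of_land_eq_zero n c.1 c.2 hl h1 h2
      exact ⟨c, ⟨by rw [land_eq_and]; exact hl, this⟩, by
        simp only [cellCorners, Set.mem_insert_iff, Set.mem_singleton_iff]; exact hcor⟩
    · -- top copy
      right; right
      push_neg at h2
      have hc2 : c.2 < 2 ^ (n + 1) := by omega
      have hl' : (c.2 - 2 ^ n) &&& c.1 = 0 :=
        land_sub_two_pow (by rw [Nat.and_comm]; exact hl) h2 hc2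
      have hcell : Cell n (c.1, c.2 - 2 ^ n) :=
        ⟨by rw [land_eq_and, Nat.and_comm]; exact hl', by simp; omega⟩
      rcases hcor with h | h | h
      · exact ⟨(c.1, c.2 - 2 ^ n), ⟨(c.1, c.2 - 2 ^ n), hcell, by simp [cellCorners]⟩,
          by simp [h, Prod.ext_iff]; omega⟩
      · exact ⟨(c.1 + 1, c.2 - 2 ^ n), ⟨(c.1, c.2 - 2 ^ n), hcell, by
          simp only [cellCorners, Set.mem_insert_iff, Set.mem_singleton_iff]
          right; left; simp [Prod.ext_iff]⟩, by simp [h, Prod.ext_iff]; omega⟩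
      · exact ⟨(c.1, c.2 - 2 ^ n + 1), ⟨(c.1, c.2 - 2 ^ n), hcell, by
          simp only [cellCorners, Set.mem_insert_iff, Set.mem_singleton_iff]
          right; right; simp [Prod.ext_iff]⟩, by simp [h, Prod.ext_iff]; omega⟩
  · -- right copy
    right; left
    push_neg at h1
    have hc1 : c.1 < 2 ^ (n + 1) := by omega
    have hl' : (c.1 - 2 ^ n) &&& c.2 = 0 := land_sub_two_pow hl h1 hc1
    have hcell : Cell n (c.1 - 2 ^ n, c.2) :=
      ⟨by rw [land_eq_and]; exact hl', by simp; omega⟩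
    rcases hcor with h | h | h
    · exact ⟨(c.1 - 2 ^ n, c.2), ⟨(c.1 - 2 ^ n, c.2), hcell, by simp [cellCorners]⟩,
        by simp [h, Prod.ext_iff]; omega⟩
    · exact ⟨(c.1 - 2 ^ n + 1, c.2), ⟨(c.1 - 2 ^ n, c.2), hcell, by
        simp only [cellCorners, Set.mem_insert_iff, Set.mem_singleton_iff]
        right; left; simp [Prod.ext_iff]⟩, by simp [h, Prod.ext_iff]; omega⟩
    · exact ⟨(c.1 - 2 ^ n, c.2 + 1), ⟨(c.1 - 2 ^ n, c.2), hcell, by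
        simp only [cellCorners, Set.mem_insert_iff, Set.mem_singleton_iff]
        right; right; simp [Prod.ext_iff]⟩, by simp [h, Prod.ext_iff]; omega⟩

/-! ### Main walk-existence lemma -/

private lemma exists_walk (n : ℕ) :
    ∀ u ∈ verts n, ∀ v ∈ verts n, ∃ w : (graph n).Walk u v, w.length ≤ 2 ^ n := by
  induction n with
  | zero =>
    intro u hu v hv
    have key : ∀ x ∈ verts 0, x ∈ cellCorners ((0, 0) : ℕ × ℕ) := by
      rintro x ⟨c, ⟨_, hs⟩, hx⟩
      have hc : c = (0, 0) := by
        obtain ⟨c1, c2⟩ := c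
        simp only [pow_zero] at hs
        simp only [Prod.ext_iff]
        omega
      rwa [hc] at hx
    by_cases he : u = v
    · subst he; exact ⟨.nil, by simp⟩
    · exact ⟨.cons ⟨he, (0, 0), ⟨rfl, by norm_num⟩, key u hu, key v hv⟩ .nil, le_of_eq rfl⟩
  | succ n ih =>
    intro u hu v hv
    have e2 : (2:ℕ) ^ (n + 1) = 2 ^ n + 2 ^ n := by ring
    have hA : ∀ a ∈ verts n, ∀ b ∈ verts n,
        ∃ w : (graph (n + 1)).Walk a b, w.length ≤ 2 ^ n := by
      intro a ha b hb
      obtain ⟨w, hw⟩ := ih a ha b hb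
      exact ⟨w.map (homA n), (SimpleGraph.Walk.length_map (f := homA n) (p := w)).le.trans hw⟩
    have hB : ∀ a ∈ verts n, ∀ b ∈ verts n,
        ∃ w : (graph (n + 1)).Walk (2 ^ n + a.1, a.2) (2 ^ n + b.1, b.2),
          w.length ≤ 2 ^ n := by
      intro a ha b hb
      obtain ⟨w, hw⟩ := ih a ha b hb
      exact ⟨w.map (homB n), (SimpleGraph.Walk.length_map (f := homB n) (p := w)).le.trans hw⟩
    have hC : ∀ a ∈ verts n, ∀ b ∈ verts n,
        ∃ w : (graph (n + 1)).Walk (a.1, 2 ^ n + a.2) (b.1, 2 ^ n + b.2),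
          w.length ≤ 2 ^ n := by
      intro a ha b hb
      obtain ⟨w, hw⟩ := ih a ha b hb
      exact ⟨w.map (homC n), (SimpleGraph.Walk.length_map (f := homC n) (p := w)).le.trans hw⟩
    have h00 := origin_mem_verts n
    have hX := right_mem_verts n
    have hY := top_mem_verts n
    rcases verts_succ hu with hu' | ⟨u', hu', rfl⟩ | ⟨u', hu', rfl⟩ <;>
      rcases verts_succ hv with hv' | ⟨v', hv', rfl⟩ | ⟨v', hv', rfl⟩
    · obtain ⟨w, hw⟩ := hA u hu' v hv'
      exact ⟨w, by omega⟩
    · obtain ⟨w1, hw1⟩ := hA u hu' (2 ^ n, 0) hX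
      obtain ⟨w2, hw2⟩ := hB (0, 0) h00 v' hv'
      exact ⟨w1.append w2, by rw [SimpleGraph.Walk.length_append]; omega⟩
    · obtain ⟨w1, hw1⟩ := hA u hu' (0, 2 ^ n) hY
      obtain ⟨w2, hw2⟩ := hC (0, 0) h00 v' hv'
      exact ⟨w1.append w2, by rw [SimpleGraph.Walk.length_append]; omega⟩
    · obtain ⟨w1, hw1⟩ := hB u' hu' (0, 0) h00
      obtain ⟨w2, hw2⟩ := hA (2 ^ n, 0) hX v hv'
      exact ⟨w1.append w2, by rw [SimpleGraph.Walk.length_append]; omega⟩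
    · obtain ⟨w, hw⟩ := hB u' hu' v' hv'
      exact ⟨w, by omega⟩
    · obtain ⟨w1, hw1⟩ := hB u' hu' (0, 2 ^ n) hY
      obtain ⟨w2, hw2⟩ := hC (2 ^ n, 0) hX v' hv'
      exact ⟨w1.append w2, by rw [SimpleGraph.Walk.length_append]; omega⟩
    · obtain ⟨w1, hw1⟩ := hC u' hu' (0, 0) h00
      obtain ⟨w2, hw2⟩ := hA (0, 2 ^ n) hY v hv'
      exact ⟨w1.append w2, by rw [SimpleGraph.Walk.length_append]; omega⟩
    · obtain ⟨w1, hw1⟩ := hC u' hu' (2 ^ n, 0) hX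
      obtain ⟨w2, hw2⟩ := hB (0, 2 ^ n) hY v' hv'
      exact ⟨w1.append w2, by rw [SimpleGraph.Walk.length_append]; omega⟩
    · obtain ⟨w, hw⟩ := hC u' hu' v' hv'
      exact ⟨w, by omega⟩

/-- In `ST₃ⁿ` (`n ≥ 0`), the distance between any two vertices is at most `2 ^ n`. -/
theorem dist_le_two_pow (n : ℕ) :
    ∀ u ∈ verts n, ∀ v ∈ verts n, (graph n).dist u v ≤ 2 ^ n := by
  intro u hu v hv
  obtain ⟨w, hw⟩ := exists_walk n u hu v hv
  exact (SimpleGraph.dist_le w).trans hw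
end SierpinskiTriangle
end

section
/- The mutual-visibility number of ST_3^1 equals 4, and the general position number of ST_3^1 equals 3. -/
namespace SierpinskiTriangle

/-! ### Auxiliary lemmas for level 1 -/

def corner3 (c u : ℕ × ℕ) : Prop := u = c ∨ u = (c.1 + 1, c.2) ∨ u = (c.1, c.2 + 1)

instance (c u : ℕ × ℕ) : Decidable (corner3 c u) := by unfold corner3; infer_instance

lemma mem_cellCorners (c u : ℕ × ℕ) : u ∈ cellCorners c ↔ corner3 c u := by
  simp [cellCorners, corner3, Set.mem_insert_iff]

lemma cell_one {c : ℕ × ℕ} (h : Cell 1 c) : c = (0,0) ∨ c = (1,0) ∨ c = (0,1) := by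
  obtain ⟨x, y⟩ := c
  obtain ⟨h1, h2⟩ := h
  simp only [Prod.mk.injEq]
  norm_num at h2
  omega

lemma adj_iff (u v : ℕ × ℕ) : (graph 1).Adj u v ↔ u ≠ v ∧
    ((corner3 (0,0) u ∧ corner3 (0,0) v) ∨ (corner3 (1,0) u ∧ corner3 (1,0) v) ∨
     (corner3 (0,1) u ∧ corner3 (0,1) v)) := by
  constructor
  · rintro ⟨hne, c, hc, hu, hv⟩
    rw [mem_cellCorners] at hu hv
    rcases cell_one hc with rfl | rfl | rfl
    · exact ⟨hne, Or.inl ⟨hu, hv⟩⟩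
    · exact ⟨hne, Or.inr (Or.inl ⟨hu, hv⟩)⟩
    · exact ⟨hne, Or.inr (Or.inr ⟨hu, hv⟩)⟩
  · rintro ⟨hne, (⟨hu, hv⟩ | ⟨hu, hv⟩ | ⟨hu, hv⟩)⟩
    · exact ⟨hne, (0,0), ⟨by decide, by decide⟩, (mem_cellCorners _ _).2 hu, (mem_cellCorners _ _).2 hv⟩
    · exact ⟨hne, (1,0), ⟨by decide, by decide⟩, (mem_cellCorners _ _).2 hu, (mem_cellCorners _ _).2 hv⟩
    · exact ⟨hne, (0,1), ⟨by decide, by decide⟩, (mem_cellCorners _ _).2 hu, (mem_cellCorners _ _).2 hv⟩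

lemma verts_one : verts 1 = {(0,0),(1,0),(0,1),(2,0),(1,1),(0,2)} := by
  ext ⟨x, y⟩
  simp only [verts, Set.mem_setOf_eq, Set.mem_insert_iff, Set.mem_singleton_iff]
  constructor
  · rintro ⟨c, hc, hm⟩
    rw [mem_cellCorners] at hm
    rcases cell_one hc with rfl | rfl | rfl <;>
      simp only [corner3, Prod.mk.injEq] at hm ⊢ <;> omega
  · rintro (h | h | h | h | h | h)
    · exact ⟨(0,0), ⟨by decide, by decide⟩, (mem_cellCorners _ _).2 (by rw [h]; decide)⟩
    · exact ⟨(0,0), ⟨by decide, by decide⟩, (mem_cellCorners _ _).2 (by rw [h]; decide)⟩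
    · exact ⟨(0,0), ⟨by decide, by decide⟩, (mem_cellCorners _ _).2 (by rw [h]; decide)⟩
    · exact ⟨(1,0), ⟨by decide, by decide⟩, (mem_cellCorners _ _).2 (by rw [h]; decide)⟩
    · exact ⟨(1,0), ⟨by decide, by decide⟩, (mem_cellCorners _ _).2 (by rw [h]; decide)⟩
    · exact ⟨(0,1), ⟨by decide, by decide⟩, (mem_cellCorners _ _).2 (by rw [h]; decide)⟩

lemma dist_of_adj {u v : ℕ × ℕ} (h : (graph 1).Adj u v) : (graph 1).dist u v = 1 :=
  SimpleGraph.dist_eq_one_iff_adj.2 h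

lemma dist_two {u v : ℕ × ℕ} (x : ℕ × ℕ) (h1 : (graph 1).Adj u x) (h2 : (graph 1).Adj x v)
    (hne : u ≠ v) (hna : ¬ (graph 1).Adj u v) : (graph 1).dist u v = 2 := by
  have hle : (graph 1).dist u v ≤ 2 := by
    simpa using SimpleGraph.dist_le (SimpleGraph.Walk.cons h1 (SimpleGraph.Walk.cons h2 SimpleGraph.Walk.nil))
  have hr : (graph 1).Reachable u v := ⟨SimpleGraph.Walk.cons h1 (SimpleGraph.Walk.cons h2 SimpleGraph.Walk.nil)⟩
  have h0 := hr.pos_dist_of_ne hne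
  have h1' : (graph 1).dist u v ≠ 1 := fun h => hna (SimpleGraph.dist_eq_one_iff_adj.1 h)
  omega

lemma adj_concrete {u v : ℕ × ℕ} (h : u ≠ v ∧
    ((corner3 (0,0) u ∧ corner3 (0,0) v) ∨ (corner3 (1,0) u ∧ corner3 (1,0) v) ∨
     (corner3 (0,1) u ∧ corner3 (0,1) v))) : (graph 1).Adj u v := (adj_iff u v).2 h

lemma dist_ab : (graph 1).dist (0,0) (2,0) = 2 :=
  dist_two (1,0) (adj_concrete (by decide)) (adj_concrete (by decide)) (by decide)
    (by rw [adj_iff]; decide)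

lemma dist_ac : (graph 1).dist (0,0) (0,2) = 2 :=
  dist_two (0,1) (adj_concrete (by decide)) (adj_concrete (by decide)) (by decide)
    (by rw [adj_iff]; decide)

lemma dist_bc : (graph 1).dist (2,0) (0,2) = 2 :=
  dist_two (1,1) (adj_concrete (by decide)) (adj_concrete (by decide)) (by decide)
    (by rw [adj_iff]; decide)

lemma dist_ar : (graph 1).dist (0,0) (1,1) = 2 :=
  dist_two (1,0) (adj_concrete (by decide)) (adj_concrete (by decide)) (by decide)
    (by rw [adj_iff]; decide)

lemma dist_bq : (graph 1).dist (2,0) (0,1) = 2 :=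
  dist_two (1,0) (adj_concrete (by decide)) (adj_concrete (by decide)) (by decide)
    (by rw [adj_iff]; decide)

lemma dist_cp : (graph 1).dist (0,2) (1,0) = 2 :=
  dist_two (0,1) (adj_concrete (by decide)) (adj_concrete (by decide)) (by decide)
    (by rw [adj_iff]; decide)

lemma visible_self (M : Set (ℕ × ℕ)) (u : ℕ × ℕ) : Visible (graph 1) M u u :=
  ⟨SimpleGraph.Walk.nil, by simp [IsShortest, SimpleGraph.dist_self], by simp⟩

lemma visible_of_adj {M : Set (ℕ × ℕ)} {u v : ℕ × ℕ} (h : (graph 1).Adj u v) :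
    Visible (graph 1) M u v := by
  refine ⟨SimpleGraph.Walk.cons h SimpleGraph.Walk.nil, ?_, ?_⟩
  · simp [IsShortest, dist_of_adj h]
  · intro x hx _
    simpa using hx

lemma visible_two {M : Set (ℕ × ℕ)} {u v : ℕ × ℕ} (x : ℕ × ℕ) (h1 : (graph 1).Adj u x)
    (h2 : (graph 1).Adj x v) (hd : (graph 1).dist u v = 2) (hx : x ∉ M) :
    Visible (graph 1) M u v := by
  refine ⟨SimpleGraph.Walk.cons h1 (SimpleGraph.Walk.cons h2 SimpleGraph.Walk.nil), ?_, ?_⟩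
  · simp [IsShortest, hd]
  · intro y hy hyM
    simp only [SimpleGraph.Walk.support_cons, SimpleGraph.Walk.support_nil, List.mem_cons,
      List.mem_singleton, List.not_mem_nil, or_false] at hy
    rcases hy with rfl | rfl | rfl
    · exact Or.inl rfl
    · exact absurd hyM hx
    · exact Or.inr rfl

lemma not_visible {M : Set (ℕ × ℕ)} {u v m : ℕ × ℕ} (hd : (graph 1).dist u v = 2)
    (huniq : ∀ x, (graph 1).Adj u x → (graph 1).Adj x v → x = m)
    (hm : m ∈ M) (hmu : m ≠ u) (hmv : m ≠ v) : ¬ Visible (graph 1) M u v := by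
  rintro ⟨w, hlen, hsup⟩
  rw [IsShortest, hd] at hlen
  cases w with
  | nil => simp at hlen
  | cons h w' =>
    cases w' with
    | nil => simp at hlen
    | cons h' w'' =>
      cases w'' with
      | nil =>
        rename_i x
        have hx : x = m := huniq _ h h'
        have hxM : x ∈ M := by rw [hx]; exact hm
        rcases hsup x (by simp) hxM with he | he
        · exact hmu (hx.symm.trans he)
        · exact hmv (hx.symm.trans he)
      | cons h'' w3 => simp [Nat.add_eq_zero] at hlen

lemma common_ab : ∀ x, (graph 1).Adj (0,0) x → (graph 1).Adj x (2,0) → x = (1,0) := by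
  intro x h1 h2
  rw [adj_iff] at h1 h2
  obtain ⟨x1, x2⟩ := x
  revert h1 h2
  simp only [corner3, Prod.mk.injEq, ne_eq]
  omega

lemma common_ac : ∀ x, (graph 1).Adj (0,0) x → (graph 1).Adj x (0,2) → x = (0,1) := by
  intro x h1 h2
  rw [adj_iff] at h1 h2
  obtain ⟨x1, x2⟩ := x
  revert h1 h2
  simp only [corner3, Prod.mk.injEq, ne_eq]
  omega

lemma common_bc : ∀ x, (graph 1).Adj (2,0) x → (graph 1).Adj x (0,2) → x = (1,1) := by
  intro x h1 h2
  rw [adj_iff] at h1 h2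
  obtain ⟨x1, x2⟩ := x
  revert h1 h2
  simp only [corner3, Prod.mk.injEq, ne_eq]
  omega

lemma ncard_le4 {s : Set (ℕ × ℕ)} {a b c d : ℕ × ℕ} (h : s ⊆ {a, b, c, d}) : s.ncard ≤ 4 := by
  have hf : ({a, b, c, d} : Set (ℕ × ℕ)).Finite := (Set.finite_singleton d).insert c |>.insert b |>.insert a
  refine le_trans (Set.ncard_le_ncard h hf) ?_
  refine le_trans (Set.ncard_insert_le _ _) ?_
  refine le_trans (Nat.add_le_add_right (Set.ncard_insert_le _ _) 1) ?_
  refine le_trans (Nat.add_le_add_right (Nat.add_le_add_right (Set.ncard_insert_le _ _) 1) 1) ?_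
  simp [Set.ncard_singleton]

lemma ncard_le3 {s : Set (ℕ × ℕ)} {a b c : ℕ × ℕ} (h : s ⊆ {a, b, c}) : s.ncard ≤ 3 := by
  have hf : ({a, b, c} : Set (ℕ × ℕ)).Finite := (Set.finite_singleton c).insert b |>.insert a
  refine le_trans (Set.ncard_le_ncard h hf) ?_
  refine le_trans (Set.ncard_insert_le _ _) ?_
  refine le_trans (Nat.add_le_add_right (Set.ncard_insert_le _ _) 1) ?_
  simp [Set.ncard_singleton]

lemma dist_ba : (graph 1).dist (2,0) (0,0) = 2 := by rw [SimpleGraph.dist_comm]; exact dist_ab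
lemma dist_ca : (graph 1).dist (0,2) (0,0) = 2 := by rw [SimpleGraph.dist_comm]; exact dist_ac
lemma dist_cb : (graph 1).dist (0,2) (2,0) = 2 := by rw [SimpleGraph.dist_comm]; exact dist_bc
lemma dist_ra : (graph 1).dist (1,1) (0,0) = 2 := by rw [SimpleGraph.dist_comm]; exact dist_ar
lemma dist_qb : (graph 1).dist (0,1) (2,0) = 2 := by rw [SimpleGraph.dist_comm]; exact dist_bq

lemma visible_two' {M : Set (ℕ × ℕ)} {u v : ℕ × ℕ} (hd : (graph 1).dist u v = 2) (x : ℕ × ℕ)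
    (h1 : (graph 1).Adj u x) (h2 : (graph 1).Adj x v) (hx : x ∉ M) :
    Visible (graph 1) M u v := visible_two x h1 h2 hd hx

set_option maxHeartbeats 1600000

/-- `μ(ST₃¹) = 4` and `gp(ST₃¹) = 3`. -/
theorem mu_gp_one :
    ((∀ M : Set (ℕ × ℕ), IsMutualVisSet 1 M → M.ncard ≤ 4) ∧
      ∃ M : Set (ℕ × ℕ), IsMutualVisSet 1 M ∧ M.ncard = 4) ∧
    ((∀ M : Set (ℕ × ℕ), IsGenPosSet 1 M → M.ncard ≤ 3) ∧
      ∃ M : Set (ℕ × ℕ), IsGenPosSet 1 M ∧ M.ncard = 3) := by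
  refine ⟨⟨?mu_up, ?mu_lo⟩, ?gp_up, ?gp_lo⟩
  case mu_up =>
    rintro M ⟨hsub, hvis⟩
    rw [verts_one] at hsub
    have h1 : ¬((0,0) ∈ M ∧ (2,0) ∈ M ∧ (1,0) ∈ M) := by
      rintro ⟨ha, hb, hp⟩
      exact not_visible dist_ab common_ab hp (by decide) (by decide) (hvis _ ha _ hb)
    have h2 : ¬((0,0) ∈ M ∧ (0,2) ∈ M ∧ (0,1) ∈ M) := by
      rintro ⟨ha, hc, hq⟩
      exact not_visible dist_ac common_ac hq (by decide) (by decide) (hvis _ ha _ hc)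
    have h3 : ¬((2,0) ∈ M ∧ (0,2) ∈ M ∧ (1,1) ∈ M) := by
      rintro ⟨hb, hc, hr⟩
      exact not_visible dist_bc common_bc hr (by decide) (by decide) (hvis _ hb _ hc)
    by_cases ha : (0,0) ∈ M <;> by_cases hb : (2,0) ∈ M <;> by_cases hc : (0,2) ∈ M
    · -- a b c ∈ M
      have hp : (1,0) ∉ M := fun h => h1 ⟨ha, hb, h⟩
      have hq : (0,1) ∉ M := fun h => h2 ⟨ha, hc, h⟩
      have hr : (1,1) ∉ M := fun h => h3 ⟨hb, hc, h⟩
      refine ncard_le4 (a := (0,0)) (b := (2,0)) (c := (0,2)) (d := (0,2)) (fun x hx => ?_)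
      have h6 := hsub hx
      simp only [Set.mem_insert_iff, Set.mem_singleton_iff] at h6 ⊢
      rcases h6 with rfl|rfl|rfl|rfl|rfl|rfl <;> first | exact absurd hx (by assumption) | simp
    · have hp : (1,0) ∉ M := fun h => h1 ⟨ha, hb, h⟩
      refine ncard_le4 (a := (0,0)) (b := (2,0)) (c := (0,1)) (d := (1,1)) (fun x hx => ?_)
      have h6 := hsub hx
      simp only [Set.mem_insert_iff, Set.mem_singleton_iff] at h6 ⊢
      rcases h6 with rfl|rfl|rfl|rfl|rfl|rfl <;> first | exact absurd hx (by assumption) | simp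
    · have hq : (0,1) ∉ M := fun h => h2 ⟨ha, hc, h⟩
      refine ncard_le4 (a := (0,0)) (b := (0,2)) (c := (1,0)) (d := (1,1)) (fun x hx => ?_)
      have h6 := hsub hx
      simp only [Set.mem_insert_iff, Set.mem_singleton_iff] at h6 ⊢
      rcases h6 with rfl|rfl|rfl|rfl|rfl|rfl <;> first | exact absurd hx (by assumption) | simp
    · refine ncard_le4 (a := (0,0)) (b := (1,0)) (c := (0,1)) (d := (1,1)) (fun x hx => ?_)
      have h6 := hsub hx
      simp only [Set.mem_insert_iff, Set.mem_singleton_iff] at h6 ⊢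
      rcases h6 with rfl|rfl|rfl|rfl|rfl|rfl <;> first | exact absurd hx (by assumption) | simp
    · have hr : (1,1) ∉ M := fun h => h3 ⟨hb, hc, h⟩
      refine ncard_le4 (a := (2,0)) (b := (0,2)) (c := (1,0)) (d := (0,1)) (fun x hx => ?_)
      have h6 := hsub hx
      simp only [Set.mem_insert_iff, Set.mem_singleton_iff] at h6 ⊢
      rcases h6 with rfl|rfl|rfl|rfl|rfl|rfl <;> first | exact absurd hx (by assumption) | simp
    · refine ncard_le4 (a := (2,0)) (b := (1,0)) (c := (0,1)) (d := (1,1)) (fun x hx => ?_)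
      have h6 := hsub hx
      simp only [Set.mem_insert_iff, Set.mem_singleton_iff] at h6 ⊢
      rcases h6 with rfl|rfl|rfl|rfl|rfl|rfl <;> first | exact absurd hx (by assumption) | simp
    · refine ncard_le4 (a := (0,2)) (b := (1,0)) (c := (0,1)) (d := (1,1)) (fun x hx => ?_)
      have h6 := hsub hx
      simp only [Set.mem_insert_iff, Set.mem_singleton_iff] at h6 ⊢
      rcases h6 with rfl|rfl|rfl|rfl|rfl|rfl <;> first | exact absurd hx (by assumption) | simp
    · refine ncard_le4 (a := (1,0)) (b := (0,1)) (c := (1,1)) (d := (1,1)) (fun x hx => ?_)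
      have h6 := hsub hx
      simp only [Set.mem_insert_iff, Set.mem_singleton_iff] at h6 ⊢
      rcases h6 with rfl|rfl|rfl|rfl|rfl|rfl <;> first | exact absurd hx (by assumption) | simp
  case mu_lo =>
    refine ⟨{(0,0), (2,0), (0,1), (1,1)}, ⟨?_, ?_⟩, ?_⟩
    · rw [verts_one]
      intro x hx
      simp only [Set.mem_insert_iff, Set.mem_singleton_iff] at hx ⊢
      rcases hx with rfl|rfl|rfl|rfl <;> simp
    · intro u hu v hv
      simp only [Set.mem_insert_iff, Set.mem_singleton_iff] at hu hv
      rcases hu with rfl|rfl|rfl|rfl <;> rcases hv with rfl|rfl|rfl|rfl <;>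
        first
        | exact visible_self _ _
        | exact visible_of_adj (adj_concrete (by decide))
        | exact visible_two' dist_ab (1,0) (adj_concrete (by decide)) (adj_concrete (by decide)) (by simp)
        | exact visible_two' dist_ba (1,0) (adj_concrete (by decide)) (adj_concrete (by decide)) (by simp)
        | exact visible_two' dist_ar (1,0) (adj_concrete (by decide)) (adj_concrete (by decide)) (by simp)
        | exact visible_two' dist_ra (1,0) (adj_concrete (by decide)) (adj_concrete (by decide)) (by simp)
        | exact visible_two' dist_bq (1,0) (adj_concrete (by decide)) (adj_concrete (by decide)) (by simp)
        | exact visible_two' dist_qb (1,0) (adj_concrete (by decide)) (adj_concrete (by decide)) (by simp)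
    · rw [show ({(0,0), (2,0), (0,1), (1,1)} : Set (ℕ × ℕ)) =
        ↑({(0,0), (2,0), (0,1), (1,1)} : Finset (ℕ × ℕ)) by simp]
      rw [Set.ncard_coe_finset]
      rfl
  case gp_up =>
    rintro M ⟨hsub, hgp⟩
    rw [verts_one] at hsub
    -- adjacency distance facts
    have dpq : ∀ u v : ℕ × ℕ, (graph 1).Adj u v → (graph 1).dist u v = 1 := fun _ _ h => dist_of_adj h
    -- bad triple eliminator
    have bad : ∀ u v w : ℕ × ℕ, u ∈ M → v ∈ M → w ∈ M → u ≠ v → u ≠ w → v ≠ w →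
        (graph 1).dist u v = 2 → (graph 1).Adj u w → (graph 1).Adj w v → False := by
      intro u v w hu hv hw h1 h2 h3 hd ha1 ha2
      exact hgp u hu v hv w hw h1 h2 h3 (by rw [hd, dist_of_adj ha1, dist_of_adj ha2])
    have T1 : ¬((0,0) ∈ M ∧ (2,0) ∈ M ∧ (1,0) ∈ M) := by
      rintro ⟨h1, h2, h3⟩
      exact bad _ _ _ h1 h2 h3 (by decide) (by decide) (by decide) dist_ab
        (adj_concrete (by decide)) (adj_concrete (by decide))
    have T2 : ¬((0,0) ∈ M ∧ (0,2) ∈ M ∧ (0,1) ∈ M) := by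
      rintro ⟨h1, h2, h3⟩
      exact bad _ _ _ h1 h2 h3 (by decide) (by decide) (by decide) dist_ac
        (adj_concrete (by decide)) (adj_concrete (by decide))
    have T3 : ¬((2,0) ∈ M ∧ (0,2) ∈ M ∧ (1,1) ∈ M) := by
      rintro ⟨h1, h2, h3⟩
      exact bad _ _ _ h1 h2 h3 (by decide) (by decide) (by decide) dist_bc
        (adj_concrete (by decide)) (adj_concrete (by decide))
    have T4 : ¬((0,0) ∈ M ∧ (1,1) ∈ M ∧ (1,0) ∈ M) := by
      rintro ⟨h1, h2, h3⟩
      exact bad _ _ _ h1 h2 h3 (by decide) (by decide) (by decide) dist_ar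
        (adj_concrete (by decide)) (adj_concrete (by decide))
    have T5 : ¬((0,0) ∈ M ∧ (1,1) ∈ M ∧ (0,1) ∈ M) := by
      rintro ⟨h1, h2, h3⟩
      exact bad _ _ _ h1 h2 h3 (by decide) (by decide) (by decide) dist_ar
        (adj_concrete (by decide)) (adj_concrete (by decide))
    have T6 : ¬((2,0) ∈ M ∧ (0,1) ∈ M ∧ (1,0) ∈ M) := by
      rintro ⟨h1, h2, h3⟩
      exact bad _ _ _ h1 h2 h3 (by decide) (by decide) (by decide) dist_bq
        (adj_concrete (by decide)) (adj_concrete (by decide))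
    have T7 : ¬((2,0) ∈ M ∧ (0,1) ∈ M ∧ (1,1) ∈ M) := by
      rintro ⟨h1, h2, h3⟩
      exact bad _ _ _ h1 h2 h3 (by decide) (by decide) (by decide) dist_bq
        (adj_concrete (by decide)) (adj_concrete (by decide))
    have T8 : ¬((0,2) ∈ M ∧ (1,0) ∈ M ∧ (0,1) ∈ M) := by
      rintro ⟨h1, h2, h3⟩
      exact bad _ _ _ h1 h2 h3 (by decide) (by decide) (by decide) dist_cp
        (adj_concrete (by decide)) (adj_concrete (by decide))
    have T9 : ¬((0,2) ∈ M ∧ (1,0) ∈ M ∧ (1,1) ∈ M) := by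
      rintro ⟨h1, h2, h3⟩
      exact bad _ _ _ h1 h2 h3 (by decide) (by decide) (by decide) dist_cp
        (adj_concrete (by decide)) (adj_concrete (by decide))
    by_cases ha : (0,0) ∈ M <;> by_cases hb : (2,0) ∈ M <;> by_cases hc : (0,2) ∈ M
    · have hp : (1,0) ∉ M := fun h => T1 ⟨ha, hb, h⟩
      have hq : (0,1) ∉ M := fun h => T2 ⟨ha, hc, h⟩
      have hr : (1,1) ∉ M := fun h => T3 ⟨hb, hc, h⟩
      refine ncard_le3 (a := (0,0)) (b := (2,0)) (c := (0,2)) (fun x hx => ?_)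
      have h6 := hsub hx
      simp only [Set.mem_insert_iff, Set.mem_singleton_iff] at h6 ⊢
      rcases h6 with rfl|rfl|rfl|rfl|rfl|rfl <;> first | exact absurd hx (by assumption) | simp
    · -- a, b ∈ M, c ∉ M
      have hp : (1,0) ∉ M := fun h => T1 ⟨ha, hb, h⟩
      by_cases hq : (0,1) ∈ M
      · have hr : (1,1) ∉ M := fun h => T7 ⟨hb, hq, h⟩
        refine ncard_le3 (a := (0,0)) (b := (2,0)) (c := (0,1)) (fun x hx => ?_)
        have h6 := hsub hx
        simp only [Set.mem_insert_iff, Set.mem_singleton_iff] at h6 ⊢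
        rcases h6 with rfl|rfl|rfl|rfl|rfl|rfl <;> first | exact absurd hx (by assumption) | simp
      · refine ncard_le3 (a := (0,0)) (b := (2,0)) (c := (1,1)) (fun x hx => ?_)
        have h6 := hsub hx
        simp only [Set.mem_insert_iff, Set.mem_singleton_iff] at h6 ⊢
        rcases h6 with rfl|rfl|rfl|rfl|rfl|rfl <;> first | exact absurd hx (by assumption) | simp
    · -- a, c ∈ M, b ∉ M
      have hq : (0,1) ∉ M := fun h => T2 ⟨ha, hc, h⟩
      by_cases hp : (1,0) ∈ M
      · have hr : (1,1) ∉ M := fun h => T9 ⟨hc, hp, h⟩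
        refine ncard_le3 (a := (0,0)) (b := (0,2)) (c := (1,0)) (fun x hx => ?_)
        have h6 := hsub hx
        simp only [Set.mem_insert_iff, Set.mem_singleton_iff] at h6 ⊢
        rcases h6 with rfl|rfl|rfl|rfl|rfl|rfl <;> first | exact absurd hx (by assumption) | simp
      · refine ncard_le3 (a := (0,0)) (b := (0,2)) (c := (1,1)) (fun x hx => ?_)
        have h6 := hsub hx
        simp only [Set.mem_insert_iff, Set.mem_singleton_iff] at h6 ⊢
        rcases h6 with rfl|rfl|rfl|rfl|rfl|rfl <;> first | exact absurd hx (by assumption) | simp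
    · -- a ∈ M, b ∉ M, c ∉ M
      by_cases hr : (1,1) ∈ M
      · have hp : (1,0) ∉ M := fun h => T4 ⟨ha, hr, h⟩
        have hq : (0,1) ∉ M := fun h => T5 ⟨ha, hr, h⟩
        refine ncard_le3 (a := (0,0)) (b := (1,1)) (c := (1,1)) (fun x hx => ?_)
        have h6 := hsub hx
        simp only [Set.mem_insert_iff, Set.mem_singleton_iff] at h6 ⊢
        rcases h6 with rfl|rfl|rfl|rfl|rfl|rfl <;> first | exact absurd hx (by assumption) | simp
      · refine ncard_le3 (a := (0,0)) (b := (1,0)) (c := (0,1)) (fun x hx => ?_)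
        have h6 := hsub hx
        simp only [Set.mem_insert_iff, Set.mem_singleton_iff] at h6 ⊢
        rcases h6 with rfl|rfl|rfl|rfl|rfl|rfl <;> first | exact absurd hx (by assumption) | simp
    · -- b, c ∈ M, a ∉ M
      have hr : (1,1) ∉ M := fun h => T3 ⟨hb, hc, h⟩
      by_cases hp : (1,0) ∈ M
      · have hq : (0,1) ∉ M := fun h => T6 ⟨hb, h, hp⟩
        refine ncard_le3 (a := (2,0)) (b := (0,2)) (c := (1,0)) (fun x hx => ?_)
        have h6 := hsub hx
        simp only [Set.mem_insert_iff, Set.mem_singleton_iff] at h6 ⊢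
        rcases h6 with rfl|rfl|rfl|rfl|rfl|rfl <;> first | exact absurd hx (by assumption) | simp
      · refine ncard_le3 (a := (2,0)) (b := (0,2)) (c := (0,1)) (fun x hx => ?_)
        have h6 := hsub hx
        simp only [Set.mem_insert_iff, Set.mem_singleton_iff] at h6 ⊢
        rcases h6 with rfl|rfl|rfl|rfl|rfl|rfl <;> first | exact absurd hx (by assumption) | simp
    · -- b ∈ M, a ∉ M, c ∉ M
      by_cases hq : (0,1) ∈ M
      · have hp : (1,0) ∉ M := fun h => T6 ⟨hb, hq, h⟩
        have hr : (1,1) ∉ M := fun h => T7 ⟨hb, hq, h⟩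
        refine ncard_le3 (a := (2,0)) (b := (0,1)) (c := (0,1)) (fun x hx => ?_)
        have h6 := hsub hx
        simp only [Set.mem_insert_iff, Set.mem_singleton_iff] at h6 ⊢
        rcases h6 with rfl|rfl|rfl|rfl|rfl|rfl <;> first | exact absurd hx (by assumption) | simp
      · refine ncard_le3 (a := (2,0)) (b := (1,0)) (c := (1,1)) (fun x hx => ?_)
        have h6 := hsub hx
        simp only [Set.mem_insert_iff, Set.mem_singleton_iff] at h6 ⊢
        rcases h6 with rfl|rfl|rfl|rfl|rfl|rfl <;> first | exact absurd hx (by assumption) | simp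
    · -- c ∈ M, a ∉ M, b ∉ M
      by_cases hp : (1,0) ∈ M
      · have hq : (0,1) ∉ M := fun h => T8 ⟨hc, hp, h⟩
        have hr : (1,1) ∉ M := fun h => T9 ⟨hc, hp, h⟩
        refine ncard_le3 (a := (0,2)) (b := (1,0)) (c := (1,0)) (fun x hx => ?_)
        have h6 := hsub hx
        simp only [Set.mem_insert_iff, Set.mem_singleton_iff] at h6 ⊢
        rcases h6 with rfl|rfl|rfl|rfl|rfl|rfl <;> first | exact absurd hx (by assumption) | simp
      · refine ncard_le3 (a := (0,2)) (b := (0,1)) (c := (1,1)) (fun x hx => ?_)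
        have h6 := hsub hx
        simp only [Set.mem_insert_iff, Set.mem_singleton_iff] at h6 ⊢
        rcases h6 with rfl|rfl|rfl|rfl|rfl|rfl <;> first | exact absurd hx (by assumption) | simp
    · refine ncard_le3 (a := (1,0)) (b := (0,1)) (c := (1,1)) (fun x hx => ?_)
      have h6 := hsub hx
      simp only [Set.mem_insert_iff, Set.mem_singleton_iff] at h6 ⊢
      rcases h6 with rfl|rfl|rfl|rfl|rfl|rfl <;> first | exact absurd hx (by assumption) | simp
  case gp_lo =>
    refine ⟨{(0,0), (2,0), (0,2)}, ⟨?_, ?_⟩, ?_⟩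
    · rw [verts_one]
      intro x hx
      simp only [Set.mem_insert_iff, Set.mem_singleton_iff] at hx ⊢
      rcases hx with rfl|rfl|rfl <;> simp
    · intro u hu v hv w hw h1 h2 h3
      simp only [Set.mem_insert_iff, Set.mem_singleton_iff] at hu hv hw
      rcases hu with rfl|rfl|rfl <;> rcases hv with rfl|rfl|rfl <;> rcases hw with rfl|rfl|rfl <;>
        first
        | exact absurd rfl (by assumption)
        | (simp only [dist_ab, dist_ac, dist_bc, dist_ba, dist_ca, dist_cb]; omega)
    · rw [show ({(0,0), (2,0), (0,2)} : Set (ℕ × ℕ)) =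
        ↑({(0,0), (2,0), (0,2)} : Finset (ℕ × ℕ)) by simp]
      rw [Set.ncard_coe_finset]
      rfl
end SierpinskiTriangle
end

section
/- In ST_3^2, if all three proper vertices and the three extreme vertices are selected (6 vertices total), this set is simultaneously a mutual-visibility set and a general position set of ST_3^2. -/
namespace SierpinskiTriangle

open SimpleGraph

lemma adj_coord {u v : ℕ × ℕ} (h : (graph 2).Adj u v) :
    (v.1 ≤ u.1 + 1 ∧ u.1 ≤ v.1 + 1) ∧ (v.2 ≤ u.2 + 1 ∧ u.2 ≤ v.2 + 1) ∧
    (v.1 + v.2 ≤ u.1 + u.2 + 1 ∧ u.1 + u.2 ≤ v.1 + v.2 + 1) := by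
  obtain ⟨_, c, _, hu, hv⟩ := h
  simp only [cellCorners, Set.mem_insert_iff, Set.mem_singleton_iff, Prod.ext_iff] at hu hv
  obtain ⟨a, b⟩ := c
  obtain ⟨x, y⟩ := u
  obtain ⟨z, t⟩ := v
  simp only [Prod.mk.injEq] at hu hv
  rcases hu with ⟨h1, h2⟩ | ⟨h1, h2⟩ | ⟨h1, h2⟩ <;>
    rcases hv with ⟨h3, h4⟩ | ⟨h3, h4⟩ | ⟨h3, h4⟩ <;> subst h1 h2 h3 h4 <;> simp <;> omega

lemma walk_bound : ∀ {u v : ℕ × ℕ} (w : (graph 2).Walk u v),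
    (v.1 ≤ u.1 + w.length ∧ u.1 ≤ v.1 + w.length) ∧
    (v.2 ≤ u.2 + w.length ∧ u.2 ≤ v.2 + w.length) ∧
    (v.1 + v.2 ≤ u.1 + u.2 + w.length ∧ u.1 + u.2 ≤ v.1 + v.2 + w.length) := by
  intro u v w
  induction w with
  | nil => simp
  | cons h p ih =>
    have := adj_coord h
    simp only [SimpleGraph.Walk.length_cons]
    omega

lemma reach_bound {u v : ℕ × ℕ} (h : (graph 2).Reachable u v) :
    (v.1 ≤ u.1 + (graph 2).dist u v ∧ u.1 ≤ v.1 + (graph 2).dist u v) ∧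
    (v.2 ≤ u.2 + (graph 2).dist u v ∧ u.2 ≤ v.2 + (graph 2).dist u v) ∧
    (v.1 + v.2 ≤ u.1 + u.2 + (graph 2).dist u v ∧
     u.1 + u.2 ≤ v.1 + v.2 + (graph 2).dist u v) := by
  obtain ⟨w, hw⟩ := h.exists_walk_length_eq_dist
  have := walk_bound w
  omega


lemma adj_00_10 : (graph 2).Adj ((0, 0) : ℕ × ℕ) ((1, 0) : ℕ × ℕ) :=
  ⟨by decide, (0, 0), ⟨by decide, by decide⟩, by simp [cellCorners], by simp [cellCorners]⟩

lemma adj_10_20 : (graph 2).Adj ((1, 0) : ℕ × ℕ) ((2, 0) : ℕ × ℕ) :=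
  ⟨by decide, (1, 0), ⟨by decide, by decide⟩, by simp [cellCorners], by simp [cellCorners]⟩

lemma adj_20_30 : (graph 2).Adj ((2, 0) : ℕ × ℕ) ((3, 0) : ℕ × ℕ) :=
  ⟨by decide, (2, 0), ⟨by decide, by decide⟩, by simp [cellCorners], by simp [cellCorners]⟩

lemma adj_30_40 : (graph 2).Adj ((3, 0) : ℕ × ℕ) ((4, 0) : ℕ × ℕ) :=
  ⟨by decide, (3, 0), ⟨by decide, by decide⟩, by simp [cellCorners], by simp [cellCorners]⟩

lemma adj_00_01 : (graph 2).Adj ((0, 0) : ℕ × ℕ) ((0, 1) : ℕ × ℕ) :=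
  ⟨by decide, (0, 0), ⟨by decide, by decide⟩, by simp [cellCorners], by simp [cellCorners]⟩

lemma adj_01_02 : (graph 2).Adj ((0, 1) : ℕ × ℕ) ((0, 2) : ℕ × ℕ) :=
  ⟨by decide, (0, 1), ⟨by decide, by decide⟩, by simp [cellCorners], by simp [cellCorners]⟩

lemma adj_02_03 : (graph 2).Adj ((0, 2) : ℕ × ℕ) ((0, 3) : ℕ × ℕ) :=
  ⟨by decide, (0, 2), ⟨by decide, by decide⟩, by simp [cellCorners], by simp [cellCorners]⟩

lemma adj_03_04 : (graph 2).Adj ((0, 3) : ℕ × ℕ) ((0, 4) : ℕ × ℕ) :=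
  ⟨by decide, (0, 3), ⟨by decide, by decide⟩, by simp [cellCorners], by simp [cellCorners]⟩

lemma adj_40_31 : (graph 2).Adj ((4, 0) : ℕ × ℕ) ((3, 1) : ℕ × ℕ) :=
  ⟨by decide, (3, 0), ⟨by decide, by decide⟩, by simp [cellCorners], by simp [cellCorners]⟩

lemma adj_31_22 : (graph 2).Adj ((3, 1) : ℕ × ℕ) ((2, 2) : ℕ × ℕ) :=
  ⟨by decide, (2, 1), ⟨by decide, by decide⟩, by simp [cellCorners], by simp [cellCorners]⟩

lemma adj_22_13 : (graph 2).Adj ((2, 2) : ℕ × ℕ) ((1, 3) : ℕ × ℕ) :=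
  ⟨by decide, (1, 2), ⟨by decide, by decide⟩, by simp [cellCorners], by simp [cellCorners]⟩

lemma adj_13_04 : (graph 2).Adj ((1, 3) : ℕ × ℕ) ((0, 4) : ℕ × ℕ) :=
  ⟨by decide, (0, 3), ⟨by decide, by decide⟩, by simp [cellCorners], by simp [cellCorners]⟩

lemma adj_10_11 : (graph 2).Adj ((1, 0) : ℕ × ℕ) ((1, 1) : ℕ × ℕ) :=
  ⟨by decide, (1, 0), ⟨by decide, by decide⟩, by simp [cellCorners], by simp [cellCorners]⟩

lemma adj_20_21 : (graph 2).Adj ((2, 0) : ℕ × ℕ) ((2, 1) : ℕ × ℕ) :=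
  ⟨by decide, (2, 0), ⟨by decide, by decide⟩, by simp [cellCorners], by simp [cellCorners]⟩

lemma adj_02_12 : (graph 2).Adj ((0, 2) : ℕ × ℕ) ((1, 2) : ℕ × ℕ) :=
  ⟨by decide, (0, 2), ⟨by decide, by decide⟩, by simp [cellCorners], by simp [cellCorners]⟩

lemma adj_30_21 : (graph 2).Adj ((3, 0) : ℕ × ℕ) ((2, 1) : ℕ × ℕ) :=
  ⟨by decide, (2, 0), ⟨by decide, by decide⟩, by simp [cellCorners], by simp [cellCorners]⟩

lemma adj_22_12 : (graph 2).Adj ((2, 2) : ℕ × ℕ) ((1, 2) : ℕ × ℕ) :=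
  ⟨by decide, (1, 2), ⟨by decide, by decide⟩, by simp [cellCorners], by simp [cellCorners]⟩

lemma adj_02_11 : (graph 2).Adj ((0, 2) : ℕ × ℕ) ((1, 1) : ℕ × ℕ) :=
  ⟨by decide, (0, 1), ⟨by decide, by decide⟩, by simp [cellCorners], by simp [cellCorners]⟩

lemma adj_03_12 : (graph 2).Adj ((0, 3) : ℕ × ℕ) ((1, 2) : ℕ × ℕ) :=
  ⟨by decide, (0, 2), ⟨by decide, by decide⟩, by simp [cellCorners], by simp [cellCorners]⟩

lemma adj_11_20 : (graph 2).Adj ((1, 1) : ℕ × ℕ) ((2, 0) : ℕ × ℕ) :=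
  ⟨by decide, (1, 0), ⟨by decide, by decide⟩, by simp [cellCorners], by simp [cellCorners]⟩

lemma adj_21_22 : (graph 2).Adj ((2, 1) : ℕ × ℕ) ((2, 2) : ℕ × ℕ) :=
  ⟨by decide, (2, 1), ⟨by decide, by decide⟩, by simp [cellCorners], by simp [cellCorners]⟩

def w_bot : (graph 2).Walk ((0, 0) : ℕ × ℕ) ((4, 0) : ℕ × ℕ) :=
  SimpleGraph.Walk.cons adj_00_10 (SimpleGraph.Walk.cons adj_10_20 (SimpleGraph.Walk.cons adj_20_30 (SimpleGraph.Walk.cons adj_30_40 (SimpleGraph.Walk.nil))))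

lemma w_bot_len : (w_bot).length = 4 := rfl

def w_left : (graph 2).Walk ((0, 0) : ℕ × ℕ) ((0, 4) : ℕ × ℕ) :=
  SimpleGraph.Walk.cons adj_00_01 (SimpleGraph.Walk.cons adj_01_02 (SimpleGraph.Walk.cons adj_02_03 (SimpleGraph.Walk.cons adj_03_04 (SimpleGraph.Walk.nil))))

lemma w_left_len : (w_left).length = 4 := rfl

def w_hyp : (graph 2).Walk ((4, 0) : ℕ × ℕ) ((0, 4) : ℕ × ℕ) :=
  SimpleGraph.Walk.cons adj_40_31 (SimpleGraph.Walk.cons adj_31_22 (SimpleGraph.Walk.cons adj_22_13 (SimpleGraph.Walk.cons adj_13_04 (SimpleGraph.Walk.nil))))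

lemma w_hyp_len : (w_hyp).length = 4 := rfl

def w4 : (graph 2).Walk ((0, 0) : ℕ × ℕ) ((1, 1) : ℕ × ℕ) :=
  SimpleGraph.Walk.cons adj_00_10 (SimpleGraph.Walk.cons adj_10_11 (SimpleGraph.Walk.nil))

lemma w4_len : (w4).length = 2 := rfl

def w5 : (graph 2).Walk ((0, 0) : ℕ × ℕ) ((2, 1) : ℕ × ℕ) :=
  SimpleGraph.Walk.cons adj_00_10 (SimpleGraph.Walk.cons adj_10_20 (SimpleGraph.Walk.cons adj_20_21 (SimpleGraph.Walk.nil)))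

lemma w5_len : (w5).length = 3 := rfl

def w6 : (graph 2).Walk ((0, 0) : ℕ × ℕ) ((1, 2) : ℕ × ℕ) :=
  SimpleGraph.Walk.cons adj_00_01 (SimpleGraph.Walk.cons adj_01_02 (SimpleGraph.Walk.cons adj_02_12 (SimpleGraph.Walk.nil)))

lemma w6_len : (w6).length = 3 := rfl

def w7 : (graph 2).Walk ((4, 0) : ℕ × ℕ) ((1, 1) : ℕ × ℕ) :=
  SimpleGraph.Walk.cons (adj_30_40.symm) (SimpleGraph.Walk.cons (adj_20_30.symm) (SimpleGraph.Walk.cons (adj_11_20.symm) (SimpleGraph.Walk.nil)))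

lemma w7_len : (w7).length = 3 := rfl

def w8 : (graph 2).Walk ((4, 0) : ℕ × ℕ) ((2, 1) : ℕ × ℕ) :=
  SimpleGraph.Walk.cons (adj_30_40.symm) (SimpleGraph.Walk.cons adj_30_21 (SimpleGraph.Walk.nil))

lemma w8_len : (w8).length = 2 := rfl

def w9 : (graph 2).Walk ((4, 0) : ℕ × ℕ) ((1, 2) : ℕ × ℕ) :=
  SimpleGraph.Walk.cons adj_40_31 (SimpleGraph.Walk.cons adj_31_22 (SimpleGraph.Walk.cons adj_22_12 (SimpleGraph.Walk.nil)))

lemma w9_len : (w9).length = 3 := rfl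

def w10 : (graph 2).Walk ((0, 4) : ℕ × ℕ) ((1, 1) : ℕ × ℕ) :=
  SimpleGraph.Walk.cons (adj_03_04.symm) (SimpleGraph.Walk.cons (adj_02_03.symm) (SimpleGraph.Walk.cons adj_02_11 (SimpleGraph.Walk.nil)))

lemma w10_len : (w10).length = 3 := rfl

def w11 : (graph 2).Walk ((0, 4) : ℕ × ℕ) ((2, 1) : ℕ × ℕ) :=
  SimpleGraph.Walk.cons (adj_13_04.symm) (SimpleGraph.Walk.cons (adj_22_13.symm) (SimpleGraph.Walk.cons (adj_21_22.symm) (SimpleGraph.Walk.nil)))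

lemma w11_len : (w11).length = 3 := rfl

def w12 : (graph 2).Walk ((0, 4) : ℕ × ℕ) ((1, 2) : ℕ × ℕ) :=
  SimpleGraph.Walk.cons (adj_03_04.symm) (SimpleGraph.Walk.cons adj_03_12 (SimpleGraph.Walk.nil))

lemma w12_len : (w12).length = 2 := rfl

def w13 : (graph 2).Walk ((1, 1) : ℕ × ℕ) ((2, 1) : ℕ × ℕ) :=
  SimpleGraph.Walk.cons adj_11_20 (SimpleGraph.Walk.cons adj_20_21 (SimpleGraph.Walk.nil))

lemma w13_len : (w13).length = 2 := rfl

def w14 : (graph 2).Walk ((1, 1) : ℕ × ℕ) ((1, 2) : ℕ × ℕ) :=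
  SimpleGraph.Walk.cons (adj_02_11.symm) (SimpleGraph.Walk.cons adj_02_12 (SimpleGraph.Walk.nil))

lemma w14_len : (w14).length = 2 := rfl

def w15 : (graph 2).Walk ((2, 1) : ℕ × ℕ) ((1, 2) : ℕ × ℕ) :=
  SimpleGraph.Walk.cons adj_21_22 (SimpleGraph.Walk.cons adj_22_12 (SimpleGraph.Walk.nil))

lemma w15_len : (w15).length = 2 := rfl
lemma d_00_40 : (graph 2).dist ((0, 0) : ℕ × ℕ) ((4, 0) : ℕ × ℕ) = 4 := by
  have h1 := SimpleGraph.dist_le w_bot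
  rw [w_bot_len] at h1
  have h2 := reach_bound (⟨w_bot⟩ : (graph 2).Reachable ((0, 0) : ℕ × ℕ) ((4, 0) : ℕ × ℕ))
  simp only [] at h1 h2 ⊢
  omega

lemma d_00_04 : (graph 2).dist ((0, 0) : ℕ × ℕ) ((0, 4) : ℕ × ℕ) = 4 := by
  have h1 := SimpleGraph.dist_le w_left
  rw [w_left_len] at h1
  have h2 := reach_bound (⟨w_left⟩ : (graph 2).Reachable ((0, 0) : ℕ × ℕ) ((0, 4) : ℕ × ℕ))
  simp only [] at h1 h2 ⊢
  omega

lemma d_40_04 : (graph 2).dist ((4, 0) : ℕ × ℕ) ((0, 4) : ℕ × ℕ) = 4 := by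
  have h1 := SimpleGraph.dist_le w_hyp
  rw [w_hyp_len] at h1
  have h2 := reach_bound (⟨w_hyp⟩ : (graph 2).Reachable ((4, 0) : ℕ × ℕ) ((0, 4) : ℕ × ℕ))
  simp only [] at h1 h2 ⊢
  omega

lemma d_00_11 : (graph 2).dist ((0, 0) : ℕ × ℕ) ((1, 1) : ℕ × ℕ) = 2 := by
  have h1 := SimpleGraph.dist_le w4
  rw [w4_len] at h1
  have h2 := reach_bound (⟨w4⟩ : (graph 2).Reachable ((0, 0) : ℕ × ℕ) ((1, 1) : ℕ × ℕ))
  simp only [] at h1 h2 ⊢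
  omega

lemma d_00_21 : (graph 2).dist ((0, 0) : ℕ × ℕ) ((2, 1) : ℕ × ℕ) = 3 := by
  have h1 := SimpleGraph.dist_le w5
  rw [w5_len] at h1
  have h2 := reach_bound (⟨w5⟩ : (graph 2).Reachable ((0, 0) : ℕ × ℕ) ((2, 1) : ℕ × ℕ))
  simp only [] at h1 h2 ⊢
  omega

lemma d_00_12 : (graph 2).dist ((0, 0) : ℕ × ℕ) ((1, 2) : ℕ × ℕ) = 3 := by
  have h1 := SimpleGraph.dist_le w6
  rw [w6_len] at h1
  have h2 := reach_bound (⟨w6⟩ : (graph 2).Reachable ((0, 0) : ℕ × ℕ) ((1, 2) : ℕ × ℕ))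
  simp only [] at h1 h2 ⊢
  omega

lemma d_40_11 : (graph 2).dist ((4, 0) : ℕ × ℕ) ((1, 1) : ℕ × ℕ) = 3 := by
  have h1 := SimpleGraph.dist_le w7
  rw [w7_len] at h1
  have h2 := reach_bound (⟨w7⟩ : (graph 2).Reachable ((4, 0) : ℕ × ℕ) ((1, 1) : ℕ × ℕ))
  simp only [] at h1 h2 ⊢
  omega

lemma d_40_21 : (graph 2).dist ((4, 0) : ℕ × ℕ) ((2, 1) : ℕ × ℕ) = 2 := by
  have h1 := SimpleGraph.dist_le w8
  rw [w8_len] at h1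
  have h2 := reach_bound (⟨w8⟩ : (graph 2).Reachable ((4, 0) : ℕ × ℕ) ((2, 1) : ℕ × ℕ))
  simp only [] at h1 h2 ⊢
  omega

lemma d_40_12 : (graph 2).dist ((4, 0) : ℕ × ℕ) ((1, 2) : ℕ × ℕ) = 3 := by
  have h1 := SimpleGraph.dist_le w9
  rw [w9_len] at h1
  have h2 := reach_bound (⟨w9⟩ : (graph 2).Reachable ((4, 0) : ℕ × ℕ) ((1, 2) : ℕ × ℕ))
  simp only [] at h1 h2 ⊢
  omega

lemma d_04_11 : (graph 2).dist ((0, 4) : ℕ × ℕ) ((1, 1) : ℕ × ℕ) = 3 := by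
  have h1 := SimpleGraph.dist_le w10
  rw [w10_len] at h1
  have h2 := reach_bound (⟨w10⟩ : (graph 2).Reachable ((0, 4) : ℕ × ℕ) ((1, 1) : ℕ × ℕ))
  simp only [] at h1 h2 ⊢
  omega

lemma d_04_21 : (graph 2).dist ((0, 4) : ℕ × ℕ) ((2, 1) : ℕ × ℕ) = 3 := by
  have h1 := SimpleGraph.dist_le w11
  rw [w11_len] at h1
  have h2 := reach_bound (⟨w11⟩ : (graph 2).Reachable ((0, 4) : ℕ × ℕ) ((2, 1) : ℕ × ℕ))
  simp only [] at h1 h2 ⊢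
  omega

lemma d_04_12 : (graph 2).dist ((0, 4) : ℕ × ℕ) ((1, 2) : ℕ × ℕ) = 2 := by
  have h1 := SimpleGraph.dist_le w12
  rw [w12_len] at h1
  have h2 := reach_bound (⟨w12⟩ : (graph 2).Reachable ((0, 4) : ℕ × ℕ) ((1, 2) : ℕ × ℕ))
  simp only [] at h1 h2 ⊢
  omega

lemma nonadj_11_21 : ¬ (graph 2).Adj ((1, 1) : ℕ × ℕ) ((2, 1) : ℕ × ℕ) := by
  rintro ⟨-, ⟨a, b⟩, ⟨hl, hs⟩, hu, hv⟩
  simp only [cellCorners, Set.mem_insert_iff, Set.mem_singleton_iff, Prod.mk.injEq] at hu hv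
  rcases hu with ⟨h1, h2⟩ | ⟨h1, h2⟩ | ⟨h1, h2⟩ <;>
    rcases hv with ⟨h3, h4⟩ | ⟨h3, h4⟩ | ⟨h3, h4⟩ <;>
      first
        | omega
        | (subst_vars; exact absurd hl (by decide))

lemma d_11_21 : (graph 2).dist ((1, 1) : ℕ × ℕ) ((2, 1) : ℕ × ℕ) = 2 := by
  have h1 := SimpleGraph.dist_le w13
  rw [w13_len] at h1
  have hr : (graph 2).Reachable ((1, 1) : ℕ × ℕ) ((2, 1) : ℕ × ℕ) := ⟨w13⟩
  have h0 : (graph 2).dist ((1, 1) : ℕ × ℕ) ((2, 1) : ℕ × ℕ) ≠ 0 := by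
    simp only [ne_eq, hr.dist_eq_zero_iff]; decide
  have hone : (graph 2).dist ((1, 1) : ℕ × ℕ) ((2, 1) : ℕ × ℕ) ≠ 1 := fun h =>
    nonadj_11_21 (SimpleGraph.dist_eq_one_iff_adj.mp h)
  omega

lemma nonadj_11_12 : ¬ (graph 2).Adj ((1, 1) : ℕ × ℕ) ((1, 2) : ℕ × ℕ) := by
  rintro ⟨-, ⟨a, b⟩, ⟨hl, hs⟩, hu, hv⟩
  simp only [cellCorners, Set.mem_insert_iff, Set.mem_singleton_iff, Prod.mk.injEq] at hu hv
  rcases hu with ⟨h1, h2⟩ | ⟨h1, h2⟩ | ⟨h1, h2⟩ <;>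
    rcases hv with ⟨h3, h4⟩ | ⟨h3, h4⟩ | ⟨h3, h4⟩ <;>
      first
        | omega
        | (subst_vars; exact absurd hl (by decide))

lemma d_11_12 : (graph 2).dist ((1, 1) : ℕ × ℕ) ((1, 2) : ℕ × ℕ) = 2 := by
  have h1 := SimpleGraph.dist_le w14
  rw [w14_len] at h1
  have hr : (graph 2).Reachable ((1, 1) : ℕ × ℕ) ((1, 2) : ℕ × ℕ) := ⟨w14⟩
  have h0 : (graph 2).dist ((1, 1) : ℕ × ℕ) ((1, 2) : ℕ × ℕ) ≠ 0 := by
    simp only [ne_eq, hr.dist_eq_zero_iff]; decide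
  have hone : (graph 2).dist ((1, 1) : ℕ × ℕ) ((1, 2) : ℕ × ℕ) ≠ 1 := fun h =>
    nonadj_11_12 (SimpleGraph.dist_eq_one_iff_adj.mp h)
  omega

lemma nonadj_21_12 : ¬ (graph 2).Adj ((2, 1) : ℕ × ℕ) ((1, 2) : ℕ × ℕ) := by
  rintro ⟨-, ⟨a, b⟩, ⟨hl, hs⟩, hu, hv⟩
  simp only [cellCorners, Set.mem_insert_iff, Set.mem_singleton_iff, Prod.mk.injEq] at hu hv
  rcases hu with ⟨h1, h2⟩ | ⟨h1, h2⟩ | ⟨h1, h2⟩ <;>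
    rcases hv with ⟨h3, h4⟩ | ⟨h3, h4⟩ | ⟨h3, h4⟩ <;>
      first
        | omega
        | (subst_vars; exact absurd hl (by decide))

lemma d_21_12 : (graph 2).dist ((2, 1) : ℕ × ℕ) ((1, 2) : ℕ × ℕ) = 2 := by
  have h1 := SimpleGraph.dist_le w15
  rw [w15_len] at h1
  have hr : (graph 2).Reachable ((2, 1) : ℕ × ℕ) ((1, 2) : ℕ × ℕ) := ⟨w15⟩
  have h0 : (graph 2).dist ((2, 1) : ℕ × ℕ) ((1, 2) : ℕ × ℕ) ≠ 0 := by
    simp only [ne_eq, hr.dist_eq_zero_iff]; decide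
  have hone : (graph 2).dist ((2, 1) : ℕ × ℕ) ((1, 2) : ℕ × ℕ) ≠ 1 := fun h =>
    nonadj_21_12 (SimpleGraph.dist_eq_one_iff_adj.mp h)
  omega

lemma d_40_00 : (graph 2).dist ((4, 0) : ℕ × ℕ) ((0, 0) : ℕ × ℕ) = (graph 2).dist ((0, 0) : ℕ × ℕ) ((4, 0) : ℕ × ℕ) := SimpleGraph.dist_comm

lemma d_04_00 : (graph 2).dist ((0, 4) : ℕ × ℕ) ((0, 0) : ℕ × ℕ) = (graph 2).dist ((0, 0) : ℕ × ℕ) ((0, 4) : ℕ × ℕ) := SimpleGraph.dist_comm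

lemma d_04_40 : (graph 2).dist ((0, 4) : ℕ × ℕ) ((4, 0) : ℕ × ℕ) = (graph 2).dist ((4, 0) : ℕ × ℕ) ((0, 4) : ℕ × ℕ) := SimpleGraph.dist_comm

lemma d_11_00 : (graph 2).dist ((1, 1) : ℕ × ℕ) ((0, 0) : ℕ × ℕ) = (graph 2).dist ((0, 0) : ℕ × ℕ) ((1, 1) : ℕ × ℕ) := SimpleGraph.dist_comm

lemma d_21_00 : (graph 2).dist ((2, 1) : ℕ × ℕ) ((0, 0) : ℕ × ℕ) = (graph 2).dist ((0, 0) : ℕ × ℕ) ((2, 1) : ℕ × ℕ) := SimpleGraph.dist_comm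

lemma d_12_00 : (graph 2).dist ((1, 2) : ℕ × ℕ) ((0, 0) : ℕ × ℕ) = (graph 2).dist ((0, 0) : ℕ × ℕ) ((1, 2) : ℕ × ℕ) := SimpleGraph.dist_comm

lemma d_11_40 : (graph 2).dist ((1, 1) : ℕ × ℕ) ((4, 0) : ℕ × ℕ) = (graph 2).dist ((4, 0) : ℕ × ℕ) ((1, 1) : ℕ × ℕ) := SimpleGraph.dist_comm

lemma d_21_40 : (graph 2).dist ((2, 1) : ℕ × ℕ) ((4, 0) : ℕ × ℕ) = (graph 2).dist ((4, 0) : ℕ × ℕ) ((2, 1) : ℕ × ℕ) := SimpleGraph.dist_comm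

lemma d_12_40 : (graph 2).dist ((1, 2) : ℕ × ℕ) ((4, 0) : ℕ × ℕ) = (graph 2).dist ((4, 0) : ℕ × ℕ) ((1, 2) : ℕ × ℕ) := SimpleGraph.dist_comm

lemma d_11_04 : (graph 2).dist ((1, 1) : ℕ × ℕ) ((0, 4) : ℕ × ℕ) = (graph 2).dist ((0, 4) : ℕ × ℕ) ((1, 1) : ℕ × ℕ) := SimpleGraph.dist_comm

lemma d_21_04 : (graph 2).dist ((2, 1) : ℕ × ℕ) ((0, 4) : ℕ × ℕ) = (graph 2).dist ((0, 4) : ℕ × ℕ) ((2, 1) : ℕ × ℕ) := SimpleGraph.dist_comm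

lemma d_12_04 : (graph 2).dist ((1, 2) : ℕ × ℕ) ((0, 4) : ℕ × ℕ) = (graph 2).dist ((0, 4) : ℕ × ℕ) ((1, 2) : ℕ × ℕ) := SimpleGraph.dist_comm

lemma d_21_11 : (graph 2).dist ((2, 1) : ℕ × ℕ) ((1, 1) : ℕ × ℕ) = (graph 2).dist ((1, 1) : ℕ × ℕ) ((2, 1) : ℕ × ℕ) := SimpleGraph.dist_comm

lemma d_12_11 : (graph 2).dist ((1, 2) : ℕ × ℕ) ((1, 1) : ℕ × ℕ) = (graph 2).dist ((1, 1) : ℕ × ℕ) ((1, 2) : ℕ × ℕ) := SimpleGraph.dist_comm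

lemma d_12_21 : (graph 2).dist ((1, 2) : ℕ × ℕ) ((2, 1) : ℕ × ℕ) = (graph 2).dist ((2, 1) : ℕ × ℕ) ((1, 2) : ℕ × ℕ) := SimpleGraph.dist_comm
lemma interval_dist {u v x : ℕ × ℕ} (h : x ∈ interval (graph 2) u v) :
    (graph 2).dist u x + (graph 2).dist x v ≤ (graph 2).dist u v := by
  obtain ⟨w, hw, hx⟩ := h
  have hw' : w.length = (graph 2).dist u v := hw
  have h1 := SimpleGraph.dist_le (w.takeUntil x hx)
  have h2 := SimpleGraph.dist_le (w.dropUntil x hx)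
  have h3 := congrArg SimpleGraph.Walk.length (w.take_spec hx)
  rw [SimpleGraph.Walk.length_append] at h3
  omega

lemma verts2_mem {v : ℕ × ℕ} (h : v ∈ verts 2) :
    v ∈ ({(0,0),(1,0),(2,0),(3,0),(4,0),(0,1),(1,1),(2,1),(3,1),(0,2),(1,2),(2,2),(0,3),(1,3),(0,4)} : Set (ℕ × ℕ)) := by
  obtain ⟨⟨a, b⟩, ⟨hl, hs⟩, hv⟩ := h
  norm_num at hs
  have ha : a = 0 ∨ a = 1 ∨ a = 2 ∨ a = 3 := by omega
  have hb : b = 0 ∨ b = 1 ∨ b = 2 ∨ b = 3 := by omega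
  rcases ha with rfl | rfl | rfl | rfl <;> rcases hb with rfl | rfl | rfl | rfl <;>
    first
      | exact absurd hl (by decide)
      | exact absurd hs (by decide)
      | (simp only [cellCorners, Set.mem_insert_iff, Set.mem_singleton_iff] at hv
         rcases hv with rfl | rfl | rfl <;>
           (simp only [Set.mem_insert_iff, Set.mem_singleton_iff, Prod.mk.injEq]; decide))
lemma mem_int_bot {x : ℕ × ℕ} (hx : x ∈ (w_bot).support) :
    x ∈ interval (graph 2) ((0, 0) : ℕ × ℕ) ((4, 0) : ℕ × ℕ) :=
  ⟨w_bot, w_bot_len.trans d_00_40.symm, hx⟩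

lemma mem_int_left {x : ℕ × ℕ} (hx : x ∈ (w_left).support) :
    x ∈ interval (graph 2) ((0, 0) : ℕ × ℕ) ((0, 4) : ℕ × ℕ) :=
  ⟨w_left, w_left_len.trans d_00_04.symm, hx⟩

lemma mem_int_hyp {x : ℕ × ℕ} (hx : x ∈ (w_hyp).support) :
    x ∈ interval (graph 2) ((4, 0) : ℕ × ℕ) ((0, 4) : ℕ × ℕ) :=
  ⟨w_hyp, w_hyp_len.trans d_40_04.symm, hx⟩

lemma mem_verts_00 : ((0, 0) : ℕ × ℕ) ∈ verts 2 :=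
  ⟨(0, 0), ⟨by decide, by decide⟩, by simp [cellCorners]⟩

lemma mem_verts_40 : ((4, 0) : ℕ × ℕ) ∈ verts 2 :=
  ⟨(3, 0), ⟨by decide, by decide⟩, by simp [cellCorners]⟩

lemma mem_verts_04 : ((0, 4) : ℕ × ℕ) ∈ verts 2 :=
  ⟨(0, 3), ⟨by decide, by decide⟩, by simp [cellCorners]⟩

lemma mem_verts_11 : ((1, 1) : ℕ × ℕ) ∈ verts 2 :=
  ⟨(1, 0), ⟨by decide, by decide⟩, by simp [cellCorners]⟩

lemma mem_verts_21 : ((2, 1) : ℕ × ℕ) ∈ verts 2 :=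
  ⟨(2, 0), ⟨by decide, by decide⟩, by simp [cellCorners]⟩

lemma mem_verts_12 : ((1, 2) : ℕ × ℕ) ∈ verts 2 :=
  ⟨(0, 2), ⟨by decide, by decide⟩, by simp [cellCorners]⟩

lemma vis_00_40 : Visible (graph 2) ({(0,0),(4,0),(0,4),(1,1),(2,1),(1,2)} : Set (ℕ × ℕ)) ((0, 0) : ℕ × ℕ) ((4, 0) : ℕ × ℕ) := by
  refine ⟨w_bot, w_bot_len.trans d_00_40.symm, ?_⟩
  intro x hx hS
  have hsup : (w_bot).support = [(0, 0), (1, 0), (2, 0), (3, 0), (4, 0)] := rfl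
  rw [hsup] at hx
  simp only [List.mem_cons, List.not_mem_nil, or_false] at hx
  simp only [Set.mem_insert_iff, Set.mem_singleton_iff] at hS
  rcases hx with rfl | rfl | rfl | rfl | rfl <;> revert hS <;> decide

lemma vis_00_04 : Visible (graph 2) ({(0,0),(4,0),(0,4),(1,1),(2,1),(1,2)} : Set (ℕ × ℕ)) ((0, 0) : ℕ × ℕ) ((0, 4) : ℕ × ℕ) := by
  refine ⟨w_left, w_left_len.trans d_00_04.symm, ?_⟩
  intro x hx hS
  have hsup : (w_left).support = [(0, 0), (0, 1), (0, 2), (0, 3), (0, 4)] := rfl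
  rw [hsup] at hx
  simp only [List.mem_cons, List.not_mem_nil, or_false] at hx
  simp only [Set.mem_insert_iff, Set.mem_singleton_iff] at hS
  rcases hx with rfl | rfl | rfl | rfl | rfl <;> revert hS <;> decide

lemma vis_40_04 : Visible (graph 2) ({(0,0),(4,0),(0,4),(1,1),(2,1),(1,2)} : Set (ℕ × ℕ)) ((4, 0) : ℕ × ℕ) ((0, 4) : ℕ × ℕ) := by
  refine ⟨w_hyp, w_hyp_len.trans d_40_04.symm, ?_⟩
  intro x hx hS
  have hsup : (w_hyp).support = [(4, 0), (3, 1), (2, 2), (1, 3), (0, 4)] := rfl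
  rw [hsup] at hx
  simp only [List.mem_cons, List.not_mem_nil, or_false] at hx
  simp only [Set.mem_insert_iff, Set.mem_singleton_iff] at hS
  rcases hx with rfl | rfl | rfl | rfl | rfl <;> revert hS <;> decide

lemma vis_00_11 : Visible (graph 2) ({(0,0),(4,0),(0,4),(1,1),(2,1),(1,2)} : Set (ℕ × ℕ)) ((0, 0) : ℕ × ℕ) ((1, 1) : ℕ × ℕ) := by
  refine ⟨w4, w4_len.trans d_00_11.symm, ?_⟩
  intro x hx hS
  have hsup : (w4).support = [(0, 0), (1, 0), (1, 1)] := rfl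
  rw [hsup] at hx
  simp only [List.mem_cons, List.not_mem_nil, or_false] at hx
  simp only [Set.mem_insert_iff, Set.mem_singleton_iff] at hS
  rcases hx with rfl | rfl | rfl <;> revert hS <;> decide

lemma vis_00_21 : Visible (graph 2) ({(0,0),(4,0),(0,4),(1,1),(2,1),(1,2)} : Set (ℕ × ℕ)) ((0, 0) : ℕ × ℕ) ((2, 1) : ℕ × ℕ) := by
  refine ⟨w5, w5_len.trans d_00_21.symm, ?_⟩
  intro x hx hS
  have hsup : (w5).support = [(0, 0), (1, 0), (2, 0), (2, 1)] := rfl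
  rw [hsup] at hx
  simp only [List.mem_cons, List.not_mem_nil, or_false] at hx
  simp only [Set.mem_insert_iff, Set.mem_singleton_iff] at hS
  rcases hx with rfl | rfl | rfl | rfl <;> revert hS <;> decide

lemma vis_00_12 : Visible (graph 2) ({(0,0),(4,0),(0,4),(1,1),(2,1),(1,2)} : Set (ℕ × ℕ)) ((0, 0) : ℕ × ℕ) ((1, 2) : ℕ × ℕ) := by
  refine ⟨w6, w6_len.trans d_00_12.symm, ?_⟩
  intro x hx hS
  have hsup : (w6).support = [(0, 0), (0, 1), (0, 2), (1, 2)] := rfl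
  rw [hsup] at hx
  simp only [List.mem_cons, List.not_mem_nil, or_false] at hx
  simp only [Set.mem_insert_iff, Set.mem_singleton_iff] at hS
  rcases hx with rfl | rfl | rfl | rfl <;> revert hS <;> decide

lemma vis_40_11 : Visible (graph 2) ({(0,0),(4,0),(0,4),(1,1),(2,1),(1,2)} : Set (ℕ × ℕ)) ((4, 0) : ℕ × ℕ) ((1, 1) : ℕ × ℕ) := by
  refine ⟨w7, w7_len.trans d_40_11.symm, ?_⟩
  intro x hx hS
  have hsup : (w7).support = [(4, 0), (3, 0), (2, 0), (1, 1)] := rfl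
  rw [hsup] at hx
  simp only [List.mem_cons, List.not_mem_nil, or_false] at hx
  simp only [Set.mem_insert_iff, Set.mem_singleton_iff] at hS
  rcases hx with rfl | rfl | rfl | rfl <;> revert hS <;> decide

lemma vis_40_21 : Visible (graph 2) ({(0,0),(4,0),(0,4),(1,1),(2,1),(1,2)} : Set (ℕ × ℕ)) ((4, 0) : ℕ × ℕ) ((2, 1) : ℕ × ℕ) := by
  refine ⟨w8, w8_len.trans d_40_21.symm, ?_⟩
  intro x hx hS
  have hsup : (w8).support = [(4, 0), (3, 0), (2, 1)] := rfl
  rw [hsup] at hx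
  simp only [List.mem_cons, List.not_mem_nil, or_false] at hx
  simp only [Set.mem_insert_iff, Set.mem_singleton_iff] at hS
  rcases hx with rfl | rfl | rfl <;> revert hS <;> decide

lemma vis_40_12 : Visible (graph 2) ({(0,0),(4,0),(0,4),(1,1),(2,1),(1,2)} : Set (ℕ × ℕ)) ((4, 0) : ℕ × ℕ) ((1, 2) : ℕ × ℕ) := by
  refine ⟨w9, w9_len.trans d_40_12.symm, ?_⟩
  intro x hx hS
  have hsup : (w9).support = [(4, 0), (3, 1), (2, 2), (1, 2)] := rfl
  rw [hsup] at hx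
  simp only [List.mem_cons, List.not_mem_nil, or_false] at hx
  simp only [Set.mem_insert_iff, Set.mem_singleton_iff] at hS
  rcases hx with rfl | rfl | rfl | rfl <;> revert hS <;> decide

lemma vis_04_11 : Visible (graph 2) ({(0,0),(4,0),(0,4),(1,1),(2,1),(1,2)} : Set (ℕ × ℕ)) ((0, 4) : ℕ × ℕ) ((1, 1) : ℕ × ℕ) := by
  refine ⟨w10, w10_len.trans d_04_11.symm, ?_⟩
  intro x hx hS
  have hsup : (w10).support = [(0, 4), (0, 3), (0, 2), (1, 1)] := rfl
  rw [hsup] at hx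
  simp only [List.mem_cons, List.not_mem_nil, or_false] at hx
  simp only [Set.mem_insert_iff, Set.mem_singleton_iff] at hS
  rcases hx with rfl | rfl | rfl | rfl <;> revert hS <;> decide

lemma vis_04_21 : Visible (graph 2) ({(0,0),(4,0),(0,4),(1,1),(2,1),(1,2)} : Set (ℕ × ℕ)) ((0, 4) : ℕ × ℕ) ((2, 1) : ℕ × ℕ) := by
  refine ⟨w11, w11_len.trans d_04_21.symm, ?_⟩
  intro x hx hS
  have hsup : (w11).support = [(0, 4), (1, 3), (2, 2), (2, 1)] := rfl
  rw [hsup] at hx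
  simp only [List.mem_cons, List.not_mem_nil, or_false] at hx
  simp only [Set.mem_insert_iff, Set.mem_singleton_iff] at hS
  rcases hx with rfl | rfl | rfl | rfl <;> revert hS <;> decide

lemma vis_04_12 : Visible (graph 2) ({(0,0),(4,0),(0,4),(1,1),(2,1),(1,2)} : Set (ℕ × ℕ)) ((0, 4) : ℕ × ℕ) ((1, 2) : ℕ × ℕ) := by
  refine ⟨w12, w12_len.trans d_04_12.symm, ?_⟩
  intro x hx hS
  have hsup : (w12).support = [(0, 4), (0, 3), (1, 2)] := rfl
  rw [hsup] at hx
  simp only [List.mem_cons, List.not_mem_nil, or_false] at hx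
  simp only [Set.mem_insert_iff, Set.mem_singleton_iff] at hS
  rcases hx with rfl | rfl | rfl <;> revert hS <;> decide

lemma vis_11_21 : Visible (graph 2) ({(0,0),(4,0),(0,4),(1,1),(2,1),(1,2)} : Set (ℕ × ℕ)) ((1, 1) : ℕ × ℕ) ((2, 1) : ℕ × ℕ) := by
  refine ⟨w13, w13_len.trans d_11_21.symm, ?_⟩
  intro x hx hS
  have hsup : (w13).support = [(1, 1), (2, 0), (2, 1)] := rfl
  rw [hsup] at hx
  simp only [List.mem_cons, List.not_mem_nil, or_false] at hx
  simp only [Set.mem_insert_iff, Set.mem_singleton_iff] at hS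
  rcases hx with rfl | rfl | rfl <;> revert hS <;> decide

lemma vis_11_12 : Visible (graph 2) ({(0,0),(4,0),(0,4),(1,1),(2,1),(1,2)} : Set (ℕ × ℕ)) ((1, 1) : ℕ × ℕ) ((1, 2) : ℕ × ℕ) := by
  refine ⟨w14, w14_len.trans d_11_12.symm, ?_⟩
  intro x hx hS
  have hsup : (w14).support = [(1, 1), (0, 2), (1, 2)] := rfl
  rw [hsup] at hx
  simp only [List.mem_cons, List.not_mem_nil, or_false] at hx
  simp only [Set.mem_insert_iff, Set.mem_singleton_iff] at hS
  rcases hx with rfl | rfl | rfl <;> revert hS <;> decide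

lemma vis_21_12 : Visible (graph 2) ({(0,0),(4,0),(0,4),(1,1),(2,1),(1,2)} : Set (ℕ × ℕ)) ((2, 1) : ℕ × ℕ) ((1, 2) : ℕ × ℕ) := by
  refine ⟨w15, w15_len.trans d_21_12.symm, ?_⟩
  intro x hx hS
  have hsup : (w15).support = [(2, 1), (2, 2), (1, 2)] := rfl
  rw [hsup] at hx
  simp only [List.mem_cons, List.not_mem_nil, or_false] at hx
  simp only [Set.mem_insert_iff, Set.mem_singleton_iff] at hS
  rcases hx with rfl | rfl | rfl <;> revert hS <;> decide
lemma vis_symm {M : Set (ℕ × ℕ)} {u v : ℕ × ℕ} (h : Visible (graph 2) M u v) :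
    Visible (graph 2) M v u := by
  obtain ⟨w, hw, hs⟩ := h
  refine ⟨w.reverse, ?_, ?_⟩
  · show w.reverse.length = _
    rw [SimpleGraph.Walk.length_reverse, SimpleGraph.dist_comm]
    exact hw
  · intro x hx hm
    exact (hs x (by simpa using hx) hm).symm

lemma vis_refl (M : Set (ℕ × ℕ)) (u : ℕ × ℕ) : Visible (graph 2) M u u := by
  refine ⟨SimpleGraph.Walk.nil, ?_, ?_⟩
  · show (0 : ℕ) = _
    rw [SimpleGraph.dist_self]
  · intro x hx _
    simp only [SimpleGraph.Walk.support_nil, List.mem_singleton] at hx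
    exact Or.inl hx

lemma properVerts_eq : properVerts 2 ((0, 0) : ℕ × ℕ) = ({(1,1),(2,1),(1,2)} : Set (ℕ × ℕ)) := by
  have hnorm : properVerts 2 ((0, 0) : ℕ × ℕ) =
      copyVerts 2 (0, 0) \
        (interval (graph 2) (0, 0) (4, 0) ∪ interval (graph 2) (0, 0) (0, 4) ∪
         interval (graph 2) (4, 0) (0, 4)) := rfl
  rw [hnorm]
  ext x
  simp only [Set.mem_diff, Set.mem_union]
  constructor
  · rintro ⟨⟨⟨a, b⟩, hv, rfl⟩, hni⟩
    have h15 := verts2_mem hv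
    simp only [Set.mem_insert_iff, Set.mem_singleton_iff, Prod.mk.injEq] at h15 ⊢
    rcases h15 with ⟨rfl, rfl⟩ | ⟨rfl, rfl⟩ | ⟨rfl, rfl⟩ | ⟨rfl, rfl⟩ | ⟨rfl, rfl⟩ |
      ⟨rfl, rfl⟩ | ⟨rfl, rfl⟩ | ⟨rfl, rfl⟩ | ⟨rfl, rfl⟩ | ⟨rfl, rfl⟩ | ⟨rfl, rfl⟩ |
      ⟨rfl, rfl⟩ | ⟨rfl, rfl⟩ | ⟨rfl, rfl⟩ | ⟨rfl, rfl⟩ <;>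
      first
        | decide
        | exact absurd (Or.inl (Or.inl (mem_int_bot (by decide)))) hni
        | exact absurd (Or.inl (Or.inr (mem_int_left (by decide)))) hni
        | exact absurd (Or.inr (mem_int_hyp (by decide))) hni
  · intro hx
    have key : ∀ p : ℕ × ℕ, p ∈ verts 2 →
        (graph 2).dist (0,0) p + (graph 2).dist p (4,0) > 4 →
        (graph 2).dist (0,0) p + (graph 2).dist p (0,4) > 4 →
        (graph 2).dist (4,0) p + (graph 2).dist p (0,4) > 4 →
        p ∈ copyVerts 2 (0, 0) \
          (interval (graph 2) (0, 0) (4, 0) ∪ interval (graph 2) (0, 0) (0, 4) ∪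
           interval (graph 2) (4, 0) (0, 4)) := by
      intro p hp h1 h2 h3
      refine ⟨⟨p, hp, by simp⟩, ?_⟩
      rintro ((h | h) | h)
      · have := interval_dist h
        rw [d_00_40] at this; omega
      · have := interval_dist h
        rw [d_00_04] at this; omega
      · have := interval_dist h
        rw [d_40_04] at this; omega
    simp only [Set.mem_insert_iff, Set.mem_singleton_iff] at hx
    rcases hx with rfl | rfl | rfl
    · exact key _ mem_verts_11 (by rw [d_00_11, d_11_40, d_40_11]; norm_num) (by rw [d_00_11, d_11_04, d_04_11]; norm_num) (by rw [d_40_11, d_11_04, d_04_11]; norm_num)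
    · exact key _ mem_verts_21 (by rw [d_00_21, d_21_40, d_40_21]; norm_num) (by rw [d_00_21, d_21_04, d_04_21]; norm_num) (by rw [d_40_21, d_21_04, d_04_21]; norm_num)
    · exact key _ mem_verts_12 (by rw [d_00_12, d_12_40, d_40_12]; norm_num) (by rw [d_00_12, d_12_04, d_04_12]; norm_num) (by rw [d_40_12, d_12_04, d_04_12]; norm_num)

lemma M_eq : properVerts 2 ((0, 0) : ℕ × ℕ) ∪ extreme 2 =
    ({(0,0),(4,0),(0,4),(1,1),(2,1),(1,2)} : Set (ℕ × ℕ)) := by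
  have he : extreme 2 = ({(0,0),(4,0),(0,4)} : Set (ℕ × ℕ)) := rfl
  rw [properVerts_eq, he]
  ext x
  simp only [Set.mem_union, Set.mem_insert_iff, Set.mem_singleton_iff]
  tauto
/-- In `ST₃²`, the set of the three proper vertices together with the three extreme
vertices (6 vertices total) is simultaneously a mutual-visibility set and a general
position set of `ST₃²`. -/
theorem proper_union_extreme_mv_gp :
    (properVerts 2 ((0, 0) : ℕ × ℕ) ∪ extreme 2).ncard = 6 ∧
    IsMutualVisSet 2 (properVerts 2 ((0, 0) : ℕ × ℕ) ∪ extreme 2) ∧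
    IsGenPosSet 2 (properVerts 2 ((0, 0) : ℕ × ℕ) ∪ extreme 2) := by
  rw [M_eq]
  have hsub : ({(0,0),(4,0),(0,4),(1,1),(2,1),(1,2)} : Set (ℕ × ℕ)) ⊆ verts 2 := by
    intro x hx
    simp only [Set.mem_insert_iff, Set.mem_singleton_iff] at hx
    rcases hx with rfl | rfl | rfl | rfl | rfl | rfl
    exacts [mem_verts_00, mem_verts_40, mem_verts_04, mem_verts_11, mem_verts_21, mem_verts_12]
  refine ⟨?_, ⟨hsub, ?_⟩, ⟨hsub, ?_⟩⟩
  · rw [show ({(0,0),(4,0),(0,4),(1,1),(2,1),(1,2)} : Set (ℕ × ℕ)) =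
        ↑({(0,0),(4,0),(0,4),(1,1),(2,1),(1,2)} : Finset (ℕ × ℕ)) by simp]
    rw [Set.ncard_coe_finset]
    decide
  · intro u hu v hv
    simp only [Set.mem_insert_iff, Set.mem_singleton_iff] at hu hv
    rcases hu with rfl | rfl | rfl | rfl | rfl | rfl <;>
      rcases hv with rfl | rfl | rfl | rfl | rfl | rfl <;>
      first
        | exact vis_refl _ _
        | exact vis_00_40 | exact vis_symm vis_00_40
        | exact vis_00_04 | exact vis_symm vis_00_04
        | exact vis_40_04 | exact vis_symm vis_40_04
        | exact vis_00_11 | exact vis_symm vis_00_11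
        | exact vis_00_21 | exact vis_symm vis_00_21
        | exact vis_00_12 | exact vis_symm vis_00_12
        | exact vis_40_11 | exact vis_symm vis_40_11
        | exact vis_40_21 | exact vis_symm vis_40_21
        | exact vis_40_12 | exact vis_symm vis_40_12
        | exact vis_04_11 | exact vis_symm vis_04_11
        | exact vis_04_21 | exact vis_symm vis_04_21
        | exact vis_04_12 | exact vis_symm vis_04_12
        | exact vis_11_21 | exact vis_symm vis_11_21
        | exact vis_11_12 | exact vis_symm vis_11_12
        | exact vis_21_12 | exact vis_symm vis_21_12
  · intro u hu v hv w hw h1 h2 h3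
    simp only [Set.mem_insert_iff, Set.mem_singleton_iff] at hu hv hw
    rcases hu with rfl | rfl | rfl | rfl | rfl | rfl <;>
      rcases hv with rfl | rfl | rfl | rfl | rfl | rfl <;>
      rcases hw with rfl | rfl | rfl | rfl | rfl | rfl <;>
      simp only [ne_eq, Prod.mk.injEq,
        d_40_00, d_04_00, d_04_40, d_11_00, d_21_00, d_12_00, d_11_40, d_21_40, d_12_40,
        d_11_04, d_21_04, d_12_04, d_21_11, d_12_11, d_12_21,
        d_00_40, d_00_04, d_40_04, d_00_11, d_00_21, d_00_12, d_40_11, d_40_21, d_40_12,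
        d_04_11, d_04_21, d_04_12, d_11_21, d_11_12, d_21_12,
        SimpleGraph.dist_self] at h1 h2 h3 ⊢ <;>
      first
        | omega
        | exact absurd trivial ‹¬True›
end SierpinskiTriangle
end

section
/- Let n ≥ 2 and let H be a copy of ST_3^2 in ST_3^n with extreme vertices p_0,p_1,p_2 and proper vertices {u,v,w}. A set M ⊆ V(ST_3^n) is H-proper (for every x ∈ V(H) ∩ M and all i,j, x and p_i are M-visible and I(p_i,p_j) ∩ M = ∅) if and only if M ∩ V(H) ⊆ {u,v,w}. -/
namespace SierpinskiTriangle

/-! ### Auxiliary lemmas -/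

section Aux

lemma land_zero_iff (x y : ℕ) : Nat.land x y = 0 ↔ ∀ k, ¬(x.testBit k ∧ y.testBit k) := by
  constructor
  · intro h k ⟨hx, hy⟩
    have := Nat.testBit_land x y k
    rw [show Nat.land x y = x &&& y from rfl] at h
    rw [h, hx, hy] at this
    simp at this
  · intro h
    apply Nat.zero_of_testBit_eq_false
    intro k
    have := Nat.testBit_land x y k
    rw [show (x &&& y) = Nat.land x y from rfl] at this
    rw [this]
    rcases Bool.eq_false_or_eq_true (x.testBit k) with h1 | h1 <;>
    rcases Bool.eq_false_or_eq_true (y.testBit k) with h2 | h2 <;>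
      simp [h1, h2]
    exact h k ⟨h1, h2⟩

lemma land4 {i j a b : ℕ} (ha : a < 4) (hb : b < 4)
    (hab : Nat.land a b = 0) (hij : Nat.land i j = 0) :
    Nat.land (i * 4 + a) (j * 4 + b) = 0 := by
  rw [land_zero_iff] at *
  intro k ⟨h1, h2⟩
  have e1 : i * 4 + a = 2 ^ 2 * i + a := by ring
  have e2 : j * 4 + b = 2 ^ 2 * j + b := by ring
  rw [e1, Nat.testBit_two_pow_mul_add i (show a < 2^2 from ha) k] at h1
  rw [e2, Nat.testBit_two_pow_mul_add j (show b < 2^2 from hb) k] at h2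
  by_cases hk : k < 2
  · simp [hk] at h1 h2; exact hab k ⟨h1, h2⟩
  · simp [hk] at h1 h2; exact hij (k-2) ⟨h1, h2⟩

lemma cell_in {n : ℕ} {o : ℕ × ℕ} (ho : IsCopy n 2 o) :
    ∀ a b : ℕ, Cell 2 (a, b) → Cell n (o.1 + a, o.2 + b) := by
  obtain ⟨i, j, rfl, hij, hb⟩ := ho
  intro a b ⟨hl, hs⟩
  simp only [Cell] at *
  norm_num at hb hs ⊢
  constructor
  · have := land4 (by omega) (by omega) hl hij
    exact this
  · omega

lemma corner_translate {o : ℕ × ℕ} {a b e f : ℕ} (h : ((a,b) : ℕ×ℕ) ∈ cellCorners (e,f)) :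
    ((o.1+a, o.2+b) : ℕ×ℕ) ∈ cellCorners (o.1+e, o.2+f) := by
  simp only [cellCorners, Set.mem_insert_iff, Set.mem_singleton_iff, Prod.ext_iff] at *
  omega

lemma mkcell (e f : ℕ) (h1 : Nat.land e f = 0) (h2 : e + f < 4) : Cell 2 (e,f) :=
  ⟨h1, by norm_num; omega⟩

lemma oadj {n : ℕ} {o : ℕ × ℕ} (hcell : ∀ a b : ℕ, Cell 2 (a,b) → Cell n (o.1+a, o.2+b))
    (e f : ℕ) {a b c d : ℕ} (hc : Cell 2 (e,f))
    (h1 : ((a,b) : ℕ×ℕ) ∈ cellCorners (e,f)) (h2 : ((c,d) : ℕ×ℕ) ∈ cellCorners (e,f))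
    (hne : ¬(a = c ∧ b = d)) :
    (graph n).Adj (o.1+a, o.2+b) (o.1+c, o.2+d) := by
  show _ ∧ _
  refine ⟨?_, (o.1+e, o.2+f), hcell e f hc, corner_translate h1, corner_translate h2⟩
  simp only [ne_eq, Prod.ext_iff]
  omega

lemma v2 (e f : ℕ) {a b : ℕ} (hc : Cell 2 (e,f)) (h : ((a,b):ℕ×ℕ) ∈ cellCorners (e,f)) :
    ((a,b):ℕ×ℕ) ∈ verts 2 := ⟨(e,f), hc, h⟩

lemma cv {o : ℕ × ℕ} {a b : ℕ} (h : ((a,b):ℕ×ℕ) ∈ verts 2) :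
    ((o.1+a, o.2+b) : ℕ×ℕ) ∈ copyVerts 2 o := ⟨(a,b), h, rfl⟩

lemma corner_mk {a b e f : ℕ} (h : (a = e ∧ b = f) ∨ (a = e+1 ∧ b = f) ∨ (a = e ∧ b = f+1)) :
    ((a,b):ℕ×ℕ) ∈ cellCorners (e,f) := by
  simp only [cellCorners, Set.mem_insert_iff, Set.mem_singleton_iff, Prod.ext_iff]
  exact h

lemma cvm {o : ℕ×ℕ} (a b e f : ℕ) (h1 : Nat.land e f = 0) (h2 : e + f < 4)
    (h : (a = e ∧ b = f) ∨ (a = e+1 ∧ b = f) ∨ (a = e ∧ b = f+1)) :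
    ((o.1+a, o.2+b) : ℕ×ℕ) ∈ copyVerts 2 o :=
  cv (v2 e f (mkcell e f h1 h2) (corner_mk h))

lemma adj_step {n : ℕ} {u v : ℕ × ℕ} (h : (graph n).Adj u v) :
    ((v.1 = u.1 + 1 ∧ v.2 = u.2) ∨ (u.1 = v.1 + 1 ∧ u.2 = v.2) ∨
     (v.1 = u.1 ∧ v.2 = u.2 + 1) ∨ (u.1 = v.1 ∧ u.2 = v.2 + 1) ∨
     (v.1 + 1 = u.1 ∧ v.2 = u.2 + 1) ∨ (u.1 + 1 = v.1 ∧ u.2 = v.2 + 1)) := by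
  obtain ⟨hne, c, _, hu, hv⟩ := (h : _ ∧ _)
  have hne' : ¬(u.1 = v.1 ∧ u.2 = v.2) := by
    intro ⟨h1, h2⟩; exact hne (Prod.ext h1 h2)
  simp only [cellCorners, Set.mem_insert_iff, Set.mem_singleton_iff, Prod.ext_iff] at hu hv
  rcases hu with ⟨e1,e2⟩|⟨e1,e2⟩|⟨e1,e2⟩ <;> rcases hv with ⟨f1,f2⟩|⟨f1,f2⟩|⟨f1,f2⟩ <;> omega

lemma walk_bound_s11 {n : ℕ} (f : ℕ × ℕ → ℤ)
    (hf : ∀ a b : ℕ × ℕ, (graph n).Adj a b → |f a - f b| ≤ 1)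
    {u v : ℕ × ℕ} (w : (graph n).Walk u v) : |f u - f v| ≤ w.length := by
  induction w with
  | nil => simp
  | cons h p ih =>
    calc |f _ - f _| ≤ |f _ - f _| + |f _ - f _| := abs_sub_le _ _ _
    _ ≤ 1 + p.length := add_le_add (hf _ _ h) ih
    _ = _ := by simp [SimpleGraph.Walk.length_cons]; ring

lemma walk_bound1 {n : ℕ} {u v : ℕ × ℕ} (w : (graph n).Walk u v) :
    |(u.1:ℤ) - v.1| ≤ w.length :=
  walk_bound_s11 (fun p => (p.1:ℤ))
    (fun _ _ h => by have := adj_step h; rw [abs_le]; omega) w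
lemma walk_bound2 {n : ℕ} {u v : ℕ × ℕ} (w : (graph n).Walk u v) :
    |(u.2:ℤ) - v.2| ≤ w.length :=
  walk_bound_s11 (fun p => (p.2:ℤ))
    (fun _ _ h => by have := adj_step h; rw [abs_le]; omega) w
lemma walk_bound3 {n : ℕ} {u v : ℕ × ℕ} (w : (graph n).Walk u v) :
    |((u.1:ℤ) + u.2) - (v.1 + v.2)| ≤ w.length :=
  walk_bound_s11 (fun p => (p.1:ℤ) + p.2)
    (fun _ _ h => by have := adj_step h; rw [abs_le]; omega) w

lemma dist_eq {n : ℕ} {u v : ℕ × ℕ} {L : ℕ} (w0 : (graph n).Walk u v) (h0 : w0.length = L)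
    (hl : ∀ w : (graph n).Walk u v, L ≤ w.length) : (graph n).dist u v = L := by
  have h1 : (graph n).dist u v ≤ L := h0 ▸ SimpleGraph.dist_le w0
  obtain ⟨w, hw⟩ := (SimpleGraph.Walk.reachable w0).exists_walk_length_eq_dist
  have := hl w
  omega

lemma bottom_support {n : ℕ} : ∀ (k : ℕ) (a b : ℕ × ℕ) (w : (graph n).Walk a b),
    w.length = k → b.1 = a.1 + k → b.2 = a.2 →
    ∀ x ∈ w.support, ∃ i ≤ k, x.1 = a.1 + i ∧ x.2 = a.2 := by
  intro k
  induction k with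
  | zero =>
    intro a b w hw h1 h2 x hx
    cases w with
    | nil => simp at hx; subst hx; exact ⟨0, le_refl 0, by omega, by omega⟩
    | cons h p => simp at hw
  | succ k ih =>
    intro a b w hw h1 h2 x hx
    cases w with
    | nil => simp at hw
    | cons h p =>
      rename_i u
      simp only [SimpleGraph.Walk.length_cons] at hw
      have hp : p.length = k := by omega
      have st := adj_step h
      have b1 := walk_bound1 p; rw [abs_le] at b1
      have b3 := walk_bound3 p; rw [abs_le] at b3
      rw [hp] at b1 b3
      have hu1 : u.1 = a.1 + 1 := by omega
      have hu2 : u.2 = a.2 := by omega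
      simp only [SimpleGraph.Walk.support_cons, List.mem_cons] at hx
      rcases hx with rfl | hx
      · exact ⟨0, by omega, by omega, rfl⟩
      · obtain ⟨i, hi, e1, e2⟩ := ih u b p hp (by omega) (by omega) x hx
        exact ⟨i + 1, by omega, by omega, by omega⟩

lemma left_support {n : ℕ} : ∀ (k : ℕ) (a b : ℕ × ℕ) (w : (graph n).Walk a b),
    w.length = k → b.2 = a.2 + k → b.1 = a.1 →
    ∀ x ∈ w.support, ∃ i ≤ k, x.2 = a.2 + i ∧ x.1 = a.1 := by
  intro k
  induction k with
  | zero =>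
    intro a b w hw h1 h2 x hx
    cases w with
    | nil => simp at hx; subst hx; exact ⟨0, le_refl 0, by omega, by omega⟩
    | cons h p => simp at hw
  | succ k ih =>
    intro a b w hw h1 h2 x hx
    cases w with
    | nil => simp at hw
    | cons h p =>
      rename_i u
      simp only [SimpleGraph.Walk.length_cons] at hw
      have hp : p.length = k := by omega
      have st := adj_step h
      have b2 := walk_bound2 p; rw [abs_le] at b2
      have b3 := walk_bound3 p; rw [abs_le] at b3
      rw [hp] at b2 b3
      have hu2 : u.2 = a.2 + 1 := by omega
      have hu1 : u.1 = a.1 := by omega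
      simp only [SimpleGraph.Walk.support_cons, List.mem_cons] at hx
      rcases hx with rfl | hx
      · exact ⟨0, by omega, by omega, rfl⟩
      · obtain ⟨i, hi, e1, e2⟩ := ih u b p hp (by omega) (by omega) x hx
        exact ⟨i + 1, by omega, by omega, by omega⟩

lemma diag_support {n : ℕ} : ∀ (k : ℕ) (a b : ℕ × ℕ) (w : (graph n).Walk a b),
    w.length = k → a.1 = b.1 + k → b.2 = a.2 + k →
    ∀ x ∈ w.support, ∃ i ≤ k, x.1 = b.1 + (k - i) ∧ x.2 = a.2 + i := by
  intro k
  induction k with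
  | zero =>
    intro a b w hw h1 h2 x hx
    cases w with
    | nil => simp at hx; subst hx; exact ⟨0, le_refl 0, by omega, by omega⟩
    | cons h p => simp at hw
  | succ k ih =>
    intro a b w hw h1 h2 x hx
    cases w with
    | nil => simp at hw
    | cons h p =>
      rename_i u
      simp only [SimpleGraph.Walk.length_cons] at hw
      have hp : p.length = k := by omega
      have st := adj_step h
      have b1 := walk_bound1 p; rw [abs_le] at b1
      have b2 := walk_bound2 p; rw [abs_le] at b2
      rw [hp] at b1 b2
      have hu2 : u.2 = a.2 + 1 := by omega
      have hu1 : u.1 = b.1 + k := by omega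
      simp only [SimpleGraph.Walk.support_cons, List.mem_cons] at hx
      rcases hx with rfl | hx
      · exact ⟨0, by omega, by omega, by omega⟩
      · obtain ⟨i, hi, e1, e2⟩ := ih u b p hp (by omega) (by omega) x hx
        exact ⟨i + 1, by omega, by omega, by omega⟩

lemma interval_comm {V : Type*} (G : SimpleGraph V) (u v : V) :
    interval G u v ⊆ interval G v u := by
  rintro x ⟨w, hs, hm⟩
  refine ⟨w.reverse, ?_, ?_⟩
  · show w.reverse.length = _
    rw [SimpleGraph.Walk.length_reverse, SimpleGraph.dist_comm]
    exact hs
  · rw [SimpleGraph.Walk.support_reverse, List.mem_reverse]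
    exact hm

lemma verts2_cases {a b : ℕ} (h : ((a,b):ℕ×ℕ) ∈ verts 2) :
    (a=0∧b=0)∨(a=1∧b=0)∨(a=2∧b=0)∨(a=3∧b=0)∨(a=4∧b=0)∨
    (a=0∧b=1)∨(a=1∧b=1)∨(a=2∧b=1)∨(a=3∧b=1)∨
    (a=0∧b=2)∨(a=1∧b=2)∨(a=2∧b=2)∨
    (a=0∧b=3)∨(a=1∧b=3)∨(a=0∧b=4) := by
  obtain ⟨⟨c1,c2⟩, ⟨hl, hs⟩, hm⟩ := h
  simp only at hl hs
  norm_num at hs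
  have h1 : c1 < 4 := by omega
  have h2 : c2 < 4 := by omega
  simp only [cellCorners, Set.mem_insert_iff, Set.mem_singleton_iff, Prod.ext_iff] at hm
  interval_cases c1 <;> interval_cases c2 <;>
    first
      | (exact absurd hl (by decide))
      | (exact absurd hs (by decide))
      | (rcases hm with ⟨rfl,rfl⟩|⟨rfl,rfl⟩|⟨rfl,rfl⟩ <;> decide)

end Aux

section Main

variable {n : ℕ} {o : ℕ × ℕ}

/-- The canonical bottom geodesic. -/
lemma bottom_facts (hcell : ∀ a b : ℕ, Cell 2 (a,b) → Cell n (o.1+a, o.2+b)) :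
    (graph n).dist (o.1, o.2) (o.1+4, o.2) = 4 ∧
    (∀ i ≤ 4, ((o.1+i, o.2) : ℕ×ℕ) ∈ interval (graph n) (o.1, o.2) (o.1+4, o.2)) ∧
    (∀ x ∈ interval (graph n) (o.1, o.2) (o.1+4, o.2), ∃ i ≤ 4, x.1 = o.1+i ∧ x.2 = o.2) := by
  have a1 : (graph n).Adj (o.1+0, o.2+0) (o.1+1, o.2+0) :=
    oadj hcell 0 0 (mkcell 0 0 (by decide) (by decide))
      (by simp [cellCorners]) (by simp [cellCorners]) (by omega)
  have a2 : (graph n).Adj (o.1+1, o.2+0) (o.1+2, o.2+0) :=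
    oadj hcell 1 0 (mkcell 1 0 (by decide) (by decide))
      (by simp [cellCorners]) (by simp [cellCorners]) (by omega)
  have a3 : (graph n).Adj (o.1+2, o.2+0) (o.1+3, o.2+0) :=
    oadj hcell 2 0 (mkcell 2 0 (by decide) (by decide))
      (by simp [cellCorners]) (by simp [cellCorners]) (by omega)
  have a4 : (graph n).Adj (o.1+3, o.2+0) (o.1+4, o.2+0) :=
    oadj hcell 3 0 (mkcell 3 0 (by decide) (by decide))
      (by simp [cellCorners]) (by simp [cellCorners]) (by omega)
  have hlb : ∀ w : (graph n).Walk (o.1, o.2) (o.1+4, o.2), 4 ≤ w.length := by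
    intro w
    have h2 : |(o.1:ℤ) - ((o.1+4 : ℕ) : ℤ)| ≤ (w.length : ℤ) := walk_bound1 w
    rw [abs_le] at h2; push_cast at h2; omega
  have hd : (graph n).dist (o.1, o.2) (o.1+4, o.2) = 4 :=
    dist_eq (L := 4) (.cons a1 (.cons a2 (.cons a3 (.cons a4 .nil)))) rfl hlb
  refine ⟨hd, ?_, ?_⟩
  · intro i hi
    refine ⟨.cons a1 (.cons a2 (.cons a3 (.cons a4 .nil))), ?_, ?_⟩
    · show SimpleGraph.Walk.length _ = _
      rw [hd]
      rfl
    · simp only [SimpleGraph.Walk.support_cons, SimpleGraph.Walk.support_nil,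
        List.mem_cons, List.mem_singleton, List.not_mem_nil, or_false, and_true,
        true_and, Prod.ext_iff]
      omega
  · rintro x ⟨w, hs, hm⟩
    have hl : w.length = 4 := by rw [hs, hd]
    exact bottom_support 4 _ _ w hl (by simp) rfl x hm

/-- The canonical left geodesic. -/
lemma left_facts (hcell : ∀ a b : ℕ, Cell 2 (a,b) → Cell n (o.1+a, o.2+b)) :
    (graph n).dist (o.1, o.2) (o.1, o.2+4) = 4 ∧
    (∀ i ≤ 4, ((o.1, o.2+i) : ℕ×ℕ) ∈ interval (graph n) (o.1, o.2) (o.1, o.2+4)) ∧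
    (∀ x ∈ interval (graph n) (o.1, o.2) (o.1, o.2+4), ∃ i ≤ 4, x.2 = o.2+i ∧ x.1 = o.1) := by
  have a1 : (graph n).Adj (o.1+0, o.2+0) (o.1+0, o.2+1) :=
    oadj hcell 0 0 (mkcell 0 0 (by decide) (by decide))
      (by simp [cellCorners]) (by simp [cellCorners]) (by omega)
  have a2 : (graph n).Adj (o.1+0, o.2+1) (o.1+0, o.2+2) :=
    oadj hcell 0 1 (mkcell 0 1 (by decide) (by decide))
      (by simp [cellCorners]) (by simp [cellCorners]) (by omega)
  have a3 : (graph n).Adj (o.1+0, o.2+2) (o.1+0, o.2+3) :=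
    oadj hcell 0 2 (mkcell 0 2 (by decide) (by decide))
      (by simp [cellCorners]) (by simp [cellCorners]) (by omega)
  have a4 : (graph n).Adj (o.1+0, o.2+3) (o.1+0, o.2+4) :=
    oadj hcell 0 3 (mkcell 0 3 (by decide) (by decide))
      (by simp [cellCorners]) (by simp [cellCorners]) (by omega)
  have hlb : ∀ w : (graph n).Walk (o.1, o.2) (o.1, o.2+4), 4 ≤ w.length := by
    intro w
    have h2 : |(o.2:ℤ) - ((o.2+4 : ℕ) : ℤ)| ≤ (w.length : ℤ) := walk_bound2 w
    rw [abs_le] at h2; push_cast at h2; omega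
  have hd : (graph n).dist (o.1, o.2) (o.1, o.2+4) = 4 :=
    dist_eq (L := 4) (.cons a1 (.cons a2 (.cons a3 (.cons a4 .nil)))) rfl hlb
  refine ⟨hd, ?_, ?_⟩
  · intro i hi
    refine ⟨.cons a1 (.cons a2 (.cons a3 (.cons a4 .nil))), ?_, ?_⟩
    · show SimpleGraph.Walk.length _ = _
      rw [hd]
      rfl
    · simp only [SimpleGraph.Walk.support_cons, SimpleGraph.Walk.support_nil,
        List.mem_cons, List.mem_singleton, List.not_mem_nil, or_false, and_true,
        true_and, Prod.ext_iff]
      omega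
  · rintro x ⟨w, hs, hm⟩
    have hl : w.length = 4 := by rw [hs, hd]
    exact left_support 4 _ _ w hl (by simp) rfl x hm

/-- The canonical diagonal geodesic. -/
lemma diag_facts (hcell : ∀ a b : ℕ, Cell 2 (a,b) → Cell n (o.1+a, o.2+b)) :
    (graph n).dist (o.1+4, o.2) (o.1, o.2+4) = 4 ∧
    (∀ i ≤ 4, ((o.1+(4-i), o.2+i) : ℕ×ℕ) ∈ interval (graph n) (o.1+4, o.2) (o.1, o.2+4)) ∧
    (∀ x ∈ interval (graph n) (o.1+4, o.2) (o.1, o.2+4),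
      ∃ i ≤ 4, x.1 = o.1+(4-i) ∧ x.2 = o.2+i) := by
  have a1 : (graph n).Adj (o.1+4, o.2+0) (o.1+3, o.2+1) :=
    oadj hcell 3 0 (mkcell 3 0 (by decide) (by decide))
      (by simp [cellCorners]) (by simp [cellCorners]) (by omega)
  have a2 : (graph n).Adj (o.1+3, o.2+1) (o.1+2, o.2+2) :=
    oadj hcell 2 1 (mkcell 2 1 (by decide) (by decide))
      (by simp [cellCorners]) (by simp [cellCorners]) (by omega)
  have a3 : (graph n).Adj (o.1+2, o.2+2) (o.1+1, o.2+3) :=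
    oadj hcell 1 2 (mkcell 1 2 (by decide) (by decide))
      (by simp [cellCorners]) (by simp [cellCorners]) (by omega)
  have a4 : (graph n).Adj (o.1+1, o.2+3) (o.1+0, o.2+4) :=
    oadj hcell 0 3 (mkcell 0 3 (by decide) (by decide))
      (by simp [cellCorners]) (by simp [cellCorners]) (by omega)
  have hlb : ∀ w : (graph n).Walk (o.1+4, o.2) (o.1, o.2+4), 4 ≤ w.length := by
    intro w
    have h2 : |(((o.1+4 : ℕ)) : ℤ) - (o.1:ℤ)| ≤ (w.length : ℤ) := walk_bound1 w
    rw [abs_le] at h2; push_cast at h2; omega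
  have hd : (graph n).dist (o.1+4, o.2) (o.1, o.2+4) = 4 :=
    dist_eq (L := 4) (.cons a1 (.cons a2 (.cons a3 (.cons a4 .nil)))) rfl hlb
  refine ⟨hd, ?_, ?_⟩
  · intro i hi
    refine ⟨.cons a1 (.cons a2 (.cons a3 (.cons a4 .nil))), ?_, ?_⟩
    · show SimpleGraph.Walk.length _ = _
      rw [hd]
      rfl
    · simp only [SimpleGraph.Walk.support_cons, SimpleGraph.Walk.support_nil,
        List.mem_cons, List.mem_singleton, List.not_mem_nil, or_false, and_true,
        true_and, Prod.ext_iff]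
      omega
  · rintro x ⟨w, hs, hm⟩
    have hl : w.length = 4 := by rw [hs, hd]
    exact diag_support 4 _ _ w hl (by simp) (by simp) x hm

end Main

/-- Let `n ≥ 2` and `H` a copy of `ST₃²` in `ST₃ⁿ`. A set `M ⊆ V(ST₃ⁿ)` is `H`-proper
(every `x ∈ V(H) ∩ M` is `M`-visible from every extreme vertex of `H`, and no interval
between extreme vertices of `H` meets `M`) iff `M ∩ V(H)` consists of proper vertices. -/

theorem H_proper_iff (n : ℕ) (hn : 2 ≤ n) (o : ℕ × ℕ) (ho : IsCopy n 2 o)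
    (M : Set (ℕ × ℕ)) (hM : M ⊆ verts n) :
    ((∀ x ∈ M ∩ copyVerts 2 o, ∀ p ∈ copyExtreme 2 o, Visible (graph n) M x p) ∧
      ∀ p ∈ copyExtreme 2 o, ∀ q ∈ copyExtreme 2 o, interval (graph n) p q ∩ M = ∅) ↔
    M ∩ copyVerts 2 o ⊆ properVerts n o := by
  have hcell := cell_in ho
  obtain ⟨o1, o2⟩ := o
  have hc0 : ((o1, o2) : ℕ×ℕ) ∈ copyExtreme 2 (o1, o2) := by
    simp [copyExtreme]
  have hc1 : ((o1 + 4, o2) : ℕ×ℕ) ∈ copyExtreme 2 (o1, o2) := by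
    simp only [copyExtreme, Set.mem_insert_iff, Set.mem_singleton_iff]
    right; left; norm_num
  have hc2 : ((o1, o2 + 4) : ℕ×ℕ) ∈ copyExtreme 2 (o1, o2) := by
    simp only [copyExtreme, Set.mem_insert_iff, Set.mem_singleton_iff]
    right; right; norm_num
  constructor
  · rintro ⟨-, h2⟩ x ⟨hxM, hxV⟩
    refine ⟨hxV, ?_⟩
    intro hmem
    rcases hmem with (hx | hx) | hx
    · exact Set.eq_empty_iff_forall_notMem.mp (h2 _ hc0 _ hc1) x ⟨hx, hxM⟩
    · exact Set.eq_empty_iff_forall_notMem.mp (h2 _ hc0 _ hc2) x ⟨hx, hxM⟩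
    · exact Set.eq_empty_iff_forall_notMem.mp (h2 _ hc1 _ hc2) x ⟨hx, hxM⟩
  · intro hMp
    have Bf := bottom_facts hcell
    have Lf := left_facts hcell
    have Df := diag_facts hcell
    -- no vertex of the copy lying on a side can be in M
    have hnM : ∀ y : ℕ×ℕ, y ∈ copyVerts 2 (o1, o2) →
        (y ∈ interval (graph n) (o1, o2) (o1+4, o2) ∨
         y ∈ interval (graph n) (o1, o2) (o1, o2+4) ∨
         y ∈ interval (graph n) (o1+4, o2) (o1, o2+4)) → y ∉ M := by
      intro y hyc hyi hyM
      have hy := hMp ⟨hyM, hyc⟩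
      rcases hyi with h | h | h
      · exact hy.2 (Or.inl (Or.inl h))
      · exact hy.2 (Or.inl (Or.inr h))
      · exact hy.2 (Or.inr h)
    have hB : ∀ i ≤ 4, ((o1+i, o2) : ℕ×ℕ) ∉ M := by
      intro i hi
      refine hnM _ ?_ (Or.inl (Bf.2.1 i hi))
      interval_cases i
      · exact cvm 0 0 0 0 (by decide) (by decide) (by omega)
      · exact cvm 1 0 0 0 (by decide) (by decide) (by omega)
      · exact cvm 2 0 1 0 (by decide) (by decide) (by omega)
      · exact cvm 3 0 2 0 (by decide) (by decide) (by omega)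
      · exact cvm 4 0 3 0 (by decide) (by decide) (by omega)
    have hL : ∀ i ≤ 4, ((o1, o2+i) : ℕ×ℕ) ∉ M := by
      intro i hi
      refine hnM _ ?_ (Or.inr (Or.inl (Lf.2.1 i hi)))
      interval_cases i
      · exact cvm 0 0 0 0 (by decide) (by decide) (by omega)
      · exact cvm 0 1 0 0 (by decide) (by decide) (by omega)
      · exact cvm 0 2 0 1 (by decide) (by decide) (by omega)
      · exact cvm 0 3 0 2 (by decide) (by decide) (by omega)
      · exact cvm 0 4 0 3 (by decide) (by decide) (by omega)
    have hD : ∀ a b : ℕ, a + b = 4 → ((o1+a, o2+b) : ℕ×ℕ) ∉ M := by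
      intro a b hab
      have hmem := Df.2.1 b (by omega)
      have e : 4 - b = a := by omega
      rw [e] at hmem
      refine hnM _ ?_ (Or.inr (Or.inr hmem))
      have hb4 : b ≤ 4 := by omega
      interval_cases b
      · exact cvm a 0 3 0 (by decide) (by decide) (by omega)
      · exact cvm a 1 2 1 (by decide) (by decide) (by omega)
      · exact cvm a 2 2 1 (by decide) (by decide) (by omega)
      · exact cvm a 3 1 2 (by decide) (by decide) (by omega)
      · exact cvm a 4 0 3 (by decide) (by decide) (by omega)
    -- intervals between extreme vertices avoid M
    have hself : ∀ r : ℕ×ℕ, r ∉ M → interval (graph n) r r ∩ M = ∅ := by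
      intro r hr
      rw [Set.eq_empty_iff_forall_notMem]
      rintro x ⟨⟨w, hs, hm⟩, hxM⟩
      have hl : w.length = 0 := by
        rw [show w.length = (graph n).dist r r from hs, SimpleGraph.dist_self]
      obtain ⟨i, hi, e1, e2⟩ := bottom_support 0 r r w hl rfl rfl x hm
      have : x = r := Prod.ext (by omega) e2
      exact hr (this ▸ hxM)
    have hBe : interval (graph n) (o1, o2) (o1+4, o2) ∩ M = ∅ := by
      rw [Set.eq_empty_iff_forall_notMem]
      rintro x ⟨hxi, hxM⟩
      obtain ⟨i, hi, e1, e2⟩ := Bf.2.2 x hxi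
      have : x = (o1+i, o2) := Prod.ext e1 e2
      exact hB i hi (this ▸ hxM)
    have hLe : interval (graph n) (o1, o2) (o1, o2+4) ∩ M = ∅ := by
      rw [Set.eq_empty_iff_forall_notMem]
      rintro x ⟨hxi, hxM⟩
      obtain ⟨i, hi, e1, e2⟩ := Lf.2.2 x hxi
      have : x = (o1, o2+i) := Prod.ext e2 e1
      exact hL i hi (this ▸ hxM)
    have hDe : interval (graph n) (o1+4, o2) (o1, o2+4) ∩ M = ∅ := by
      rw [Set.eq_empty_iff_forall_notMem]
      rintro x ⟨hxi, hxM⟩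
      obtain ⟨i, hi, e1, e2⟩ := Df.2.2 x hxi
      have : x = (o1+(4-i), o2+i) := Prod.ext e1 e2
      exact hD (4-i) i (by omega) (this ▸ hxM)
    have hcomm : ∀ u v : ℕ×ℕ, interval (graph n) u v ∩ M = ∅ →
        interval (graph n) v u ∩ M = ∅ := by
      intro u v h
      rw [Set.eq_empty_iff_forall_notMem] at *
      rintro x ⟨hxi, hxM⟩
      exact h x ⟨interval_comm _ _ _ hxi, hxM⟩
    refine ⟨?_, ?_⟩
    · -- visibility from proper vertices to extreme vertices
      intro x hx p hp
      have hxM : x ∈ M := hx.1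
      -- classify x
      have hxcl : x = (o1+1, o2+1) ∨ x = (o1+2, o2+1) ∨ x = (o1+1, o2+2) := by
        obtain ⟨-, ⟨a, b⟩, hab, rfl⟩ := hx
        rcases verts2_cases hab with ⟨rfl,rfl⟩|⟨rfl,rfl⟩|⟨rfl,rfl⟩|⟨rfl,rfl⟩|⟨rfl,rfl⟩|
          ⟨rfl,rfl⟩|⟨rfl,rfl⟩|⟨rfl,rfl⟩|⟨rfl,rfl⟩|⟨rfl,rfl⟩|⟨rfl,rfl⟩|⟨rfl,rfl⟩|
          ⟨rfl,rfl⟩|⟨rfl,rfl⟩|⟨rfl,rfl⟩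
        · exact absurd hxM (hB 0 (by norm_num))
        · exact absurd hxM (hB 1 (by norm_num))
        · exact absurd hxM (hB 2 (by norm_num))
        · exact absurd hxM (hB 3 (by norm_num))
        · exact absurd hxM (hB 4 (by norm_num))
        · exact absurd hxM (hL 1 (by norm_num))
        · exact Or.inl rfl
        · exact Or.inr (Or.inl rfl)
        · exact absurd hxM (hD 3 1 (by norm_num))
        · exact absurd hxM (hL 2 (by norm_num))
        · exact Or.inr (Or.inr rfl)
        · exact absurd hxM (hD 2 2 (by norm_num))
        · exact absurd hxM (hL 3 (by norm_num))
        · exact absurd hxM (hD 1 3 (by norm_num))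
        · exact absurd hxM (hL 4 (by norm_num))
      simp only [copyExtreme, Set.mem_insert_iff, Set.mem_singleton_iff] at hp
      norm_num at hp
      rcases hxcl with rfl | rfl | rfl <;> rcases hp with rfl | rfl | rfl
      · -- (1,1) → (0,0)
        have A1 : (graph n).Adj (o1+1, o2+1) (o1+1, o2+0) :=
          oadj hcell 1 0 (mkcell 1 0 (by decide) (by decide))
            (corner_mk (by omega)) (corner_mk (by omega)) (by omega)
        have A2 : (graph n).Adj (o1+1, o2+0) (o1+0, o2+0) :=
          oadj hcell 0 0 (mkcell 0 0 (by decide) (by decide))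
            (corner_mk (by omega)) (corner_mk (by omega)) (by omega)
        have hlb : ∀ w : (graph n).Walk (o1+1, o2+1) (o1, o2), 2 ≤ w.length := by
          intro w
          have h2 : |(((o1+1:ℕ)):ℤ) + ((o2+1:ℕ):ℤ) - ((o1:ℤ) + (o2:ℤ))| ≤ (w.length : ℤ) :=
            walk_bound3 w
          rw [abs_le] at h2; push_cast at h2; omega
        have hd : (graph n).dist (o1+1, o2+1) (o1, o2) = 2 :=
          dist_eq (L := 2) (.cons A1 (.cons A2 .nil)) rfl hlb
        refine ⟨.cons A1 (.cons A2 .nil), ?_, ?_⟩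
        · show SimpleGraph.Walk.length _ = _
          rw [hd]; rfl
        · intro y hy hyM
          simp only [SimpleGraph.Walk.support_cons, SimpleGraph.Walk.support_nil,
            List.mem_cons, List.mem_singleton, List.not_mem_nil, or_false] at hy
          rcases hy with rfl | rfl | rfl
          · exact Or.inl rfl
          · exact absurd hyM (hB 1 (by norm_num))
          · exact Or.inr rfl
      · -- (1,1) → (4,0)
        have A1 : (graph n).Adj (o1+1, o2+1) (o1+2, o2+0) :=
          oadj hcell 1 0 (mkcell 1 0 (by decide) (by decide))
            (corner_mk (by omega)) (corner_mk (by omega)) (by omega)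
        have A2 : (graph n).Adj (o1+2, o2+0) (o1+3, o2+0) :=
          oadj hcell 2 0 (mkcell 2 0 (by decide) (by decide))
            (corner_mk (by omega)) (corner_mk (by omega)) (by omega)
        have A3 : (graph n).Adj (o1+3, o2+0) (o1+4, o2+0) :=
          oadj hcell 3 0 (mkcell 3 0 (by decide) (by decide))
            (corner_mk (by omega)) (corner_mk (by omega)) (by omega)
        have hlb : ∀ w : (graph n).Walk (o1+1, o2+1) (o1+4, o2), 3 ≤ w.length := by
          intro w
          have h2 : |(((o1+1:ℕ)):ℤ) - (((o1+4:ℕ)):ℤ)| ≤ (w.length : ℤ) := walk_bound1 w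
          rw [abs_le] at h2; push_cast at h2; omega
        have hd : (graph n).dist (o1+1, o2+1) (o1+4, o2) = 3 :=
          dist_eq (L := 3) (.cons A1 (.cons A2 (.cons A3 .nil))) rfl hlb
        refine ⟨.cons A1 (.cons A2 (.cons A3 .nil)), ?_, ?_⟩
        · show SimpleGraph.Walk.length _ = _
          rw [hd]; rfl
        · intro y hy hyM
          simp only [SimpleGraph.Walk.support_cons, SimpleGraph.Walk.support_nil,
            List.mem_cons, List.mem_singleton, List.not_mem_nil, or_false] at hy
          rcases hy with rfl | rfl | rfl | rfl
          · exact Or.inl rfl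
          · exact absurd hyM (hB 2 (by norm_num))
          · exact absurd hyM (hB 3 (by norm_num))
          · exact Or.inr rfl
      · -- (1,1) → (0,4)
        have A1 : (graph n).Adj (o1+1, o2+1) (o1+0, o2+2) :=
          oadj hcell 0 1 (mkcell 0 1 (by decide) (by decide))
            (corner_mk (by omega)) (corner_mk (by omega)) (by omega)
        have A2 : (graph n).Adj (o1+0, o2+2) (o1+0, o2+3) :=
          oadj hcell 0 2 (mkcell 0 2 (by decide) (by decide))
            (corner_mk (by omega)) (corner_mk (by omega)) (by omega)
        have A3 : (graph n).Adj (o1+0, o2+3) (o1+0, o2+4) :=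
          oadj hcell 0 3 (mkcell 0 3 (by decide) (by decide))
            (corner_mk (by omega)) (corner_mk (by omega)) (by omega)
        have hlb : ∀ w : (graph n).Walk (o1+1, o2+1) (o1, o2+4), 3 ≤ w.length := by
          intro w
          have h2 : |(((o2+1:ℕ)):ℤ) - (((o2+4:ℕ)):ℤ)| ≤ (w.length : ℤ) := walk_bound2 w
          rw [abs_le] at h2; push_cast at h2; omega
        have hd : (graph n).dist (o1+1, o2+1) (o1, o2+4) = 3 :=
          dist_eq (L := 3) (.cons A1 (.cons A2 (.cons A3 .nil))) rfl hlb
        refine ⟨.cons A1 (.cons A2 (.cons A3 .nil)), ?_, ?_⟩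
        · show SimpleGraph.Walk.length _ = _
          rw [hd]; rfl
        · intro y hy hyM
          simp only [SimpleGraph.Walk.support_cons, SimpleGraph.Walk.support_nil,
            List.mem_cons, List.mem_singleton, List.not_mem_nil, or_false] at hy
          rcases hy with rfl | rfl | rfl | rfl
          · exact Or.inl rfl
          · exact absurd hyM (hL 2 (by norm_num))
          · exact absurd hyM (hL 3 (by norm_num))
          · exact Or.inr rfl
      · -- (2,1) → (0,0)
        have A1 : (graph n).Adj (o1+2, o2+1) (o1+2, o2+0) :=
          oadj hcell 2 0 (mkcell 2 0 (by decide) (by decide))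
            (corner_mk (by omega)) (corner_mk (by omega)) (by omega)
        have A2 : (graph n).Adj (o1+2, o2+0) (o1+1, o2+0) :=
          oadj hcell 1 0 (mkcell 1 0 (by decide) (by decide))
            (corner_mk (by omega)) (corner_mk (by omega)) (by omega)
        have A3 : (graph n).Adj (o1+1, o2+0) (o1+0, o2+0) :=
          oadj hcell 0 0 (mkcell 0 0 (by decide) (by decide))
            (corner_mk (by omega)) (corner_mk (by omega)) (by omega)
        have hlb : ∀ w : (graph n).Walk (o1+2, o2+1) (o1, o2), 3 ≤ w.length := by
          intro w
          have h2 : |(((o1+2:ℕ)):ℤ) + ((o2+1:ℕ):ℤ) - ((o1:ℤ) + (o2:ℤ))| ≤ (w.length : ℤ) :=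
            walk_bound3 w
          rw [abs_le] at h2; push_cast at h2; omega
        have hd : (graph n).dist (o1+2, o2+1) (o1, o2) = 3 :=
          dist_eq (L := 3) (.cons A1 (.cons A2 (.cons A3 .nil))) rfl hlb
        refine ⟨.cons A1 (.cons A2 (.cons A3 .nil)), ?_, ?_⟩
        · show SimpleGraph.Walk.length _ = _
          rw [hd]; rfl
        · intro y hy hyM
          simp only [SimpleGraph.Walk.support_cons, SimpleGraph.Walk.support_nil,
            List.mem_cons, List.mem_singleton, List.not_mem_nil, or_false] at hy
          rcases hy with rfl | rfl | rfl | rfl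
          · exact Or.inl rfl
          · exact absurd hyM (hB 2 (by norm_num))
          · exact absurd hyM (hB 1 (by norm_num))
          · exact Or.inr rfl
      · -- (2,1) → (4,0)
        have A1 : (graph n).Adj (o1+2, o2+1) (o1+3, o2+0) :=
          oadj hcell 2 0 (mkcell 2 0 (by decide) (by decide))
            (corner_mk (by omega)) (corner_mk (by omega)) (by omega)
        have A2 : (graph n).Adj (o1+3, o2+0) (o1+4, o2+0) :=
          oadj hcell 3 0 (mkcell 3 0 (by decide) (by decide))
            (corner_mk (by omega)) (corner_mk (by omega)) (by omega)
        have hlb : ∀ w : (graph n).Walk (o1+2, o2+1) (o1+4, o2), 2 ≤ w.length := by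
          intro w
          have h2 : |(((o1+2:ℕ)):ℤ) - (((o1+4:ℕ)):ℤ)| ≤ (w.length : ℤ) := walk_bound1 w
          rw [abs_le] at h2; push_cast at h2; omega
        have hd : (graph n).dist (o1+2, o2+1) (o1+4, o2) = 2 :=
          dist_eq (L := 2) (.cons A1 (.cons A2 .nil)) rfl hlb
        refine ⟨.cons A1 (.cons A2 .nil), ?_, ?_⟩
        · show SimpleGraph.Walk.length _ = _
          rw [hd]; rfl
        · intro y hy hyM
          simp only [SimpleGraph.Walk.support_cons, SimpleGraph.Walk.support_nil,
            List.mem_cons, List.mem_singleton, List.not_mem_nil, or_false] at hy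
          rcases hy with rfl | rfl | rfl
          · exact Or.inl rfl
          · exact absurd hyM (hB 3 (by norm_num))
          · exact Or.inr rfl
      · -- (2,1) → (0,4)
        have A1 : (graph n).Adj (o1+2, o2+1) (o1+2, o2+2) :=
          oadj hcell 2 1 (mkcell 2 1 (by decide) (by decide))
            (corner_mk (by omega)) (corner_mk (by omega)) (by omega)
        have A2 : (graph n).Adj (o1+2, o2+2) (o1+1, o2+3) :=
          oadj hcell 1 2 (mkcell 1 2 (by decide) (by decide))
            (corner_mk (by omega)) (corner_mk (by omega)) (by omega)
        have A3 : (graph n).Adj (o1+1, o2+3) (o1+0, o2+4) :=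
          oadj hcell 0 3 (mkcell 0 3 (by decide) (by decide))
            (corner_mk (by omega)) (corner_mk (by omega)) (by omega)
        have hlb : ∀ w : (graph n).Walk (o1+2, o2+1) (o1, o2+4), 3 ≤ w.length := by
          intro w
          have h2 : |(((o2+1:ℕ)):ℤ) - (((o2+4:ℕ)):ℤ)| ≤ (w.length : ℤ) := walk_bound2 w
          rw [abs_le] at h2; push_cast at h2; omega
        have hd : (graph n).dist (o1+2, o2+1) (o1, o2+4) = 3 :=
          dist_eq (L := 3) (.cons A1 (.cons A2 (.cons A3 .nil))) rfl hlb
        refine ⟨.cons A1 (.cons A2 (.cons A3 .nil)), ?_, ?_⟩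
        · show SimpleGraph.Walk.length _ = _
          rw [hd]; rfl
        · intro y hy hyM
          simp only [SimpleGraph.Walk.support_cons, SimpleGraph.Walk.support_nil,
            List.mem_cons, List.mem_singleton, List.not_mem_nil, or_false] at hy
          rcases hy with rfl | rfl | rfl | rfl
          · exact Or.inl rfl
          · exact absurd hyM (hD 2 2 (by norm_num))
          · exact absurd hyM (hD 1 3 (by norm_num))
          · exact Or.inr rfl
      · -- (1,2) → (0,0)
        have A1 : (graph n).Adj (o1+1, o2+2) (o1+0, o2+2) :=
          oadj hcell 0 2 (mkcell 0 2 (by decide) (by decide))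
            (corner_mk (by omega)) (corner_mk (by omega)) (by omega)
        have A2 : (graph n).Adj (o1+0, o2+2) (o1+0, o2+1) :=
          oadj hcell 0 1 (mkcell 0 1 (by decide) (by decide))
            (corner_mk (by omega)) (corner_mk (by omega)) (by omega)
        have A3 : (graph n).Adj (o1+0, o2+1) (o1+0, o2+0) :=
          oadj hcell 0 0 (mkcell 0 0 (by decide) (by decide))
            (corner_mk (by omega)) (corner_mk (by omega)) (by omega)
        have hlb : ∀ w : (graph n).Walk (o1+1, o2+2) (o1, o2), 3 ≤ w.length := by
          intro w
          have h2 : |(((o1+1:ℕ)):ℤ) + ((o2+2:ℕ):ℤ) - ((o1:ℤ) + (o2:ℤ))| ≤ (w.length : ℤ) :=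
            walk_bound3 w
          rw [abs_le] at h2; push_cast at h2; omega
        have hd : (graph n).dist (o1+1, o2+2) (o1, o2) = 3 :=
          dist_eq (L := 3) (.cons A1 (.cons A2 (.cons A3 .nil))) rfl hlb
        refine ⟨.cons A1 (.cons A2 (.cons A3 .nil)), ?_, ?_⟩
        · show SimpleGraph.Walk.length _ = _
          rw [hd]; rfl
        · intro y hy hyM
          simp only [SimpleGraph.Walk.support_cons, SimpleGraph.Walk.support_nil,
            List.mem_cons, List.mem_singleton, List.not_mem_nil, or_false] at hy
          rcases hy with rfl | rfl | rfl | rfl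
          · exact Or.inl rfl
          · exact absurd hyM (hL 2 (by norm_num))
          · exact absurd hyM (hL 1 (by norm_num))
          · exact Or.inr rfl
      · -- (1,2) → (4,0)
        have A1 : (graph n).Adj (o1+1, o2+2) (o1+2, o2+2) :=
          oadj hcell 1 2 (mkcell 1 2 (by decide) (by decide))
            (corner_mk (by omega)) (corner_mk (by omega)) (by omega)
        have A2 : (graph n).Adj (o1+2, o2+2) (o1+3, o2+1) :=
          oadj hcell 2 1 (mkcell 2 1 (by decide) (by decide))
            (corner_mk (by omega)) (corner_mk (by omega)) (by omega)
        have A3 : (graph n).Adj (o1+3, o2+1) (o1+4, o2+0) :=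
          oadj hcell 3 0 (mkcell 3 0 (by decide) (by decide))
            (corner_mk (by omega)) (corner_mk (by omega)) (by omega)
        have hlb : ∀ w : (graph n).Walk (o1+1, o2+2) (o1+4, o2), 3 ≤ w.length := by
          intro w
          have h2 : |(((o1+1:ℕ)):ℤ) - (((o1+4:ℕ)):ℤ)| ≤ (w.length : ℤ) := walk_bound1 w
          rw [abs_le] at h2; push_cast at h2; omega
        have hd : (graph n).dist (o1+1, o2+2) (o1+4, o2) = 3 :=
          dist_eq (L := 3) (.cons A1 (.cons A2 (.cons A3 .nil))) rfl hlb
        refine ⟨.cons A1 (.cons A2 (.cons A3 .nil)), ?_, ?_⟩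
        · show SimpleGraph.Walk.length _ = _
          rw [hd]; rfl
        · intro y hy hyM
          simp only [SimpleGraph.Walk.support_cons, SimpleGraph.Walk.support_nil,
            List.mem_cons, List.mem_singleton, List.not_mem_nil, or_false] at hy
          rcases hy with rfl | rfl | rfl | rfl
          · exact Or.inl rfl
          · exact absurd hyM (hD 2 2 (by norm_num))
          · exact absurd hyM (hD 3 1 (by norm_num))
          · exact Or.inr rfl
      · -- (1,2) → (0,4)
        have A1 : (graph n).Adj (o1+1, o2+2) (o1+0, o2+3) :=
          oadj hcell 0 2 (mkcell 0 2 (by decide) (by decide))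
            (corner_mk (by omega)) (corner_mk (by omega)) (by omega)
        have A2 : (graph n).Adj (o1+0, o2+3) (o1+0, o2+4) :=
          oadj hcell 0 3 (mkcell 0 3 (by decide) (by decide))
            (corner_mk (by omega)) (corner_mk (by omega)) (by omega)
        have hlb : ∀ w : (graph n).Walk (o1+1, o2+2) (o1, o2+4), 2 ≤ w.length := by
          intro w
          have h2 : |(((o2+2:ℕ)):ℤ) - (((o2+4:ℕ)):ℤ)| ≤ (w.length : ℤ) := walk_bound2 w
          rw [abs_le] at h2; push_cast at h2; omega
        have hd : (graph n).dist (o1+1, o2+2) (o1, o2+4) = 2 :=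
          dist_eq (L := 2) (.cons A1 (.cons A2 .nil)) rfl hlb
        refine ⟨.cons A1 (.cons A2 .nil), ?_, ?_⟩
        · show SimpleGraph.Walk.length _ = _
          rw [hd]; rfl
        · intro y hy hyM
          simp only [SimpleGraph.Walk.support_cons, SimpleGraph.Walk.support_nil,
            List.mem_cons, List.mem_singleton, List.not_mem_nil, or_false] at hy
          rcases hy with rfl | rfl | rfl
          · exact Or.inl rfl
          · exact absurd hyM (hL 3 (by norm_num))
          · exact Or.inr rfl
    · -- intervals between extreme vertices avoid M
      intro p hp q hq
      simp only [copyExtreme, Set.mem_insert_iff, Set.mem_singleton_iff] at hp hq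
      norm_num at hp hq
      rcases hp with rfl | rfl | rfl <;> rcases hq with rfl | rfl | rfl
      · exact hself _ (hB 0 (by norm_num))
      · exact hBe
      · exact hLe
      · exact hcomm _ _ hBe
      · exact hself _ (hB 4 (by norm_num))
      · exact hDe
      · exact hcomm _ _ hLe
      · exact hcomm _ _ hDe
      · exact hself _ (hL 4 (by norm_num))

end SierpinskiTriangle
end
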